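/- arXiv:2403.00966 — 7 statements merged into one kernel-verified Lean document; each statement's English description precedes it below -/
import Mathlib

section
/- The number of permutations of [n] with exactly m descents equals the number of permutations of [n] with exactly m excedances. -/
noncomputable def desc (n : ℕ) (σ : Equiv.Perm (Fin n)) : ℕ :=
  Nat.card {i : Fin n // ∃ h : i.val + 1 < n, σ ⟨i.val + 1, h⟩ < σ i}

noncomputable def exce (n : ℕ) (σ : Equiv.Perm (Fin n)) : ℕ :=
  Nat.card {i : Fin n // i < σ i}

def cyclicSucc {n : ℕ} (i : Fin n) : Fin n := ⟨(i.val + 1) % n, Nat.mod_lt _ i.pos⟩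

noncomputable def cdes (n : ℕ) (σ : Equiv.Perm (Fin n)) : ℕ :=
  Nat.card {i : Fin n // σ (cyclicSucc i) < σ i}

def dfsAdj {α β : Type*} [DecidableEq α] (X : α → α → Prop) (Y : β → β → Prop) (σ φ : α ≃ β) : Prop :=
  ∃ a b, X a b ∧ Y (σ a) (σ b) ∧ φ = (Equiv.swap a b).trans σ

noncomputable def outdeg {α β : Type*} [DecidableEq α] (X : α → α → Prop) (Y : β → β → Prop) (σ : α ≃ β) : ℕ :=
  Nat.card {φ : α ≃ β // dfsAdj X Y σ φ}

noncomputable def ODP {α β : Type*} [Fintype α] [Fintype β] [DecidableEq α] [DecidableEq β]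
    (X : α → α → Prop) (Y : β → β → Prop) : Polynomial ℤ :=
  ∑ σ : α ≃ β, Polynomial.X ^ outdeg X Y σ

open scoped Classical in
noncomputable def ODPc {α β : Type*} [Fintype α] [Fintype β] [DecidableEq α] [DecidableEq β]
    (X : α → α → Prop) (Y : β → β → Prop) (P : (α ≃ β) → Prop) : Polynomial ℤ :=
  ∑ σ : α ≃ β, if P σ then Polynomial.X ^ outdeg X Y σ else 0

def Tour (n : ℕ) : Fin n → Fin n → Prop := fun i j => j < i
def DPath (n : ℕ) : Fin n → Fin n → Prop := fun i j => j.val = i.val + 1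
def DCycle (n : ℕ) : Fin n → Fin n → Prop := fun i j => j = cyclicSucc i

def isPEO {n : ℕ} (R : Fin n → Fin n → Prop) : Prop :=
  (∀ i j, R i j → j < i) ∧ ∀ i j, R i j → ∀ a b : Fin n, j ≤ a → a < b → b ≤ i → R b a

def dirChordal {n : ℕ} (R : Fin n → Fin n → Prop) : Prop :=
  ∃ e : Equiv.Perm (Fin n), isPEO fun u v => R (e u) (e v)

def chordal {V : Type*} (G : SimpleGraph V) : Prop :=
  ∀ m : ℕ, 4 ≤ m → ∀ f : ZMod m → V, Function.Injective f →
    (∀ i, G.Adj (f i) (f (i + 1))) →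
    ∃ i j : ZMod m, i ≠ j ∧ j ≠ i + 1 ∧ i ≠ j + 1 ∧ G.Adj (f i) (f j)


open Finset Equiv Equiv.Perm

namespace FoataProof

variable {n : ℕ}

/-- The running maximum: max of `w 0, ..., w i`. -/
noncomputable def Mx (w : Equiv.Perm (Fin n)) (i : Fin n) : Fin n :=
  ((Finset.Iic i).image w).max' ⟨w i, Finset.mem_image.2 ⟨i, Finset.mem_Iic.2 le_rfl, rfl⟩⟩

lemma le_Mx (w : Equiv.Perm (Fin n)) {j i : Fin n} (h : j ≤ i) : w j ≤ Mx w i :=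
  Finset.le_max' _ _ (Finset.mem_image.2 ⟨j, Finset.mem_Iic.2 h, rfl⟩)

lemma Mx_le (w : Equiv.Perm (Fin n)) {i v : Fin n} (h : ∀ t, t ≤ i → w t ≤ v) : Mx w i ≤ v := by
  apply Finset.max'_le
  rintro u hu
  obtain ⟨t, ht, rfl⟩ := Finset.mem_image.1 hu
  exact h t (Finset.mem_Iic.1 ht)

lemma exists_Mx (w : Equiv.Perm (Fin n)) (i : Fin n) : ∃ t, t ≤ i ∧ w t = Mx w i := by
  obtain ⟨t, ht, he⟩ := Finset.mem_image.1 (Finset.max'_mem ((Finset.Iic i).image w)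
    ⟨w i, Finset.mem_image.2 ⟨i, Finset.mem_Iic.2 le_rfl, rfl⟩⟩)
  exact ⟨t, Finset.mem_Iic.1 ht, he⟩

lemma w_le_Mx (w : Equiv.Perm (Fin n)) (i : Fin n) : w i ≤ Mx w i := le_Mx w le_rfl

lemma Mx_mono (w : Equiv.Perm (Fin n)) {i j : Fin n} (h : i ≤ j) : Mx w i ≤ Mx w j :=
  Mx_le w fun t ht => le_Mx w (ht.trans h)

lemma symm_Mx_le (w : Equiv.Perm (Fin n)) (i : Fin n) : w.symm (Mx w i) ≤ i := by
  obtain ⟨t, ht, he⟩ := exists_Mx w i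
  rw [← he, Equiv.symm_apply_apply]; exact ht

lemma Mx_symm_Mx (w : Equiv.Perm (Fin n)) (i : Fin n) : Mx w (w.symm (Mx w i)) = Mx w i := by
  refine le_antisymm (Mx_mono w (symm_Mx_le w i)) ?_
  have := w_le_Mx w (w.symm (Mx w i))
  rwa [Equiv.apply_symm_apply] at this

lemma Mx_succ_of_le (w : Equiv.Perm (Fin n)) {i : Fin n} (h : i.val + 1 < n)
    (hle : w ⟨i.val + 1, h⟩ ≤ Mx w i) : Mx w ⟨i.val + 1, h⟩ = Mx w i := by
  refine le_antisymm (Mx_le w fun t ht => ?_) (Mx_mono w (by simp [Fin.le_def]))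
  rcases eq_or_ne t ⟨i.val + 1, h⟩ with rfl | hne
  · exact hle
  · have : t ≤ i := by
      have h1 : t.val ≤ i.val + 1 := ht
      have h2 : t.val ≠ i.val + 1 := fun hc => hne (Fin.ext hc)
      exact Fin.le_def.2 (by omega)
    exact le_Mx w this

lemma Mx_succ_of_gt (w : Equiv.Perm (Fin n)) {i : Fin n} (h : i.val + 1 < n)
    (hgt : ¬ w ⟨i.val + 1, h⟩ ≤ Mx w i) : Mx w ⟨i.val + 1, h⟩ = w ⟨i.val + 1, h⟩ := by
  refine le_antisymm (Mx_le w fun t ht => ?_) (w_le_Mx w _)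
  rcases eq_or_ne t ⟨i.val + 1, h⟩ with rfl | hne
  · exact le_rfl
  · have : t ≤ i := by
      have h1 : t.val ≤ i.val + 1 := ht
      have h2 : t.val ≠ i.val + 1 := fun hc => hne (Fin.ext hc)
      exact Fin.le_def.2 (by omega)
    exact (le_Mx w this).trans (le_of_not_ge hgt)

/-- The Foata successor function (positional). -/
noncomputable def gf (w : Equiv.Perm (Fin n)) (i : Fin n) : Fin n :=
  if h : i.val + 1 < n then
    (if w ⟨i.val + 1, h⟩ ≤ Mx w i then w ⟨i.val + 1, h⟩ else Mx w i)
  else Mx w i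

lemma gf_within {w : Equiv.Perm (Fin n)} {i : Fin n} (h : i.val + 1 < n)
    (hle : w ⟨i.val + 1, h⟩ ≤ Mx w i) : gf w i = w ⟨i.val + 1, h⟩ := by
  simp [gf, h, hle]

lemma gf_end {w : Equiv.Perm (Fin n)} {i : Fin n}
    (h : ∀ hh : i.val + 1 < n, ¬ w ⟨i.val + 1, hh⟩ ≤ Mx w i) : gf w i = Mx w i := by
  by_cases h' : i.val + 1 < n
  · simp [gf, h', h h']
  · simp [gf, h']

lemma gf_cases (w : Equiv.Perm (Fin n)) (i : Fin n) :
    (∃ h : i.val + 1 < n, w ⟨i.val + 1, h⟩ ≤ Mx w i ∧ gf w i = w ⟨i.val + 1, h⟩ ∧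
      Mx w ⟨i.val + 1, h⟩ = Mx w i) ∨
    (gf w i = Mx w i ∧ ∀ h : i.val + 1 < n, Mx w i < w ⟨i.val + 1, h⟩) := by
  by_cases h : i.val + 1 < n
  · by_cases hle : w ⟨i.val + 1, h⟩ ≤ Mx w i
    · exact Or.inl ⟨h, hle, gf_within h hle, Mx_succ_of_le w h hle⟩
    · exact Or.inr ⟨gf_end fun hh => hle, fun hh => lt_of_not_ge hle⟩
  · exact Or.inr ⟨gf_end fun hh => absurd hh h, fun hh => absurd hh h⟩

lemma Mx_ne_of_lt (w : Equiv.Perm (Fin n)) {i j : Fin n} (h : i.val < j.val) :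
    Mx w i ≠ w j := by
  intro hc
  obtain ⟨t, ht, he⟩ := exists_Mx w i
  have : t = j := w.injective (by rw [he, hc])
  subst this
  have := Fin.le_def.1 ht
  omega

lemma gf_inj (w : Equiv.Perm (Fin n)) : Function.Injective (gf w) := by
  intro i j hij
  rcases gf_cases w i with ⟨hi, hle_i, hgi, _⟩ | ⟨hgi, hend_i⟩ <;>
    rcases gf_cases w j with ⟨hj, hle_j, hgj, _⟩ | ⟨hgj, hend_j⟩
  · -- both within
    rw [hgi, hgj] at hij
    have hv : i.val + 1 = j.val + 1 := congrArg Fin.val (w.injective hij)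
    exact Fin.ext (by omega)
  · -- i within, j end
    rw [hgi, hgj] at hij
    exfalso
    -- w ⟨i+1⟩ = Mx w j
    obtain ⟨t, ht, he⟩ := exists_Mx w j
    have htj : t = ⟨i.val + 1, hi⟩ := w.injective (by rw [he, ← hij])
    subst htj
    have hval : i.val + 1 ≤ j.val := by simpa using Fin.le_def.1 ht
    have hij' : i ≤ j := Fin.le_def.2 (by omega)
    have h1 : Mx w i ≤ Mx w j := Mx_mono w hij'
    have h2 : w ⟨i.val + 1, hi⟩ ≤ Mx w i := hle_i
    have h3 : Mx w i = w ⟨i.val + 1, hi⟩ := le_antisymm (h1.trans hij.ge) h2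
    exact Mx_ne_of_lt w (by simp) h3
  · -- i end, j within
    rw [hgi, hgj] at hij
    exfalso
    obtain ⟨t, ht, he⟩ := exists_Mx w i
    have htj : t = ⟨j.val + 1, hj⟩ := w.injective (by rw [he, hij])
    subst htj
    have hval : j.val + 1 ≤ i.val := by simpa using Fin.le_def.1 ht
    have hij' : j ≤ i := Fin.le_def.2 (by omega)
    have h1 : Mx w j ≤ Mx w i := Mx_mono w hij'
    have h2 : w ⟨j.val + 1, hj⟩ ≤ Mx w j := hle_j
    have h3 : Mx w j = w ⟨j.val + 1, hj⟩ := le_antisymm (h1.trans hij.le) h2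
    exact Mx_ne_of_lt w (by simp) h3
  · -- both end
    rw [hgi, hgj] at hij
    rcases lt_trichotomy i.val j.val with hlt | heq | hlt
    · exfalso
      have hi1 : i.val + 1 < n := by have := j.isLt; omega
      have : w ⟨i.val + 1, hi1⟩ ≤ Mx w j := le_Mx w (Fin.le_def.2 (by simpa using hlt))
      have := (hend_i hi1).trans_le this
      rw [hij] at this
      exact lt_irrefl _ this
    · exact Fin.ext heq
    · exfalso
      have hj1 : j.val + 1 < n := by have := i.isLt; omega
      have : w ⟨j.val + 1, hj1⟩ ≤ Mx w i := le_Mx w (Fin.le_def.2 (by simpa using hlt))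
      have := (hend_j hj1).trans_le this
      rw [← hij] at this
      exact lt_irrefl _ this

/-- The Foata transform as a permutation: `Phi w (w i) = gf w i`. -/
noncomputable def Phi (w : Equiv.Perm (Fin n)) : Equiv.Perm (Fin n) :=
  w.symm.trans (Equiv.ofBijective (gf w) (Finite.injective_iff_bijective.1 (gf_inj w)))

lemma Phi_apply (w : Equiv.Perm (Fin n)) (i : Fin n) : Phi w (w i) = gf w i := by
  simp [Phi, Equiv.trans_apply]

lemma P_inv (w : Equiv.Perm (Fin n)) (v : Fin n) :
    Mx w (w.symm (Phi w v)) = Mx w (w.symm v) := by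
  have hv : v = w (w.symm v) := (Equiv.apply_symm_apply w v).symm
  rw [hv, Phi_apply, Equiv.symm_apply_apply]
  rcases gf_cases w (w.symm v) with ⟨h, hle, hg, hMx⟩ | ⟨hg, _⟩
  · rw [hg, Equiv.symm_apply_apply, hMx]
  · rw [hg, Mx_symm_Mx]

lemma P_zpow (w : Equiv.Perm (Fin n)) : ∀ (z : ℤ) (v : Fin n),
    Mx w (w.symm ((Phi w ^ z) v)) = Mx w (w.symm v) := by
  have h1 : ∀ v, Mx w (w.symm (Phi w v)) = Mx w (w.symm v) := P_inv w
  have h2 : ∀ v, Mx w (w.symm ((Phi w)⁻¹ v)) = Mx w (w.symm v) := by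
    intro v
    have := h1 ((Phi w)⁻¹ v)
    rw [show Phi w ((Phi w)⁻¹ v) = v from (Phi w).apply_symm_apply v] at this
    exact this.symm
  intro z
  induction z using Int.induction_on with
  | zero => simp
  | succ k ih =>
    intro v
    have hx : (Phi w ^ ((k : ℤ) + 1)) v = (Phi w ^ (k : ℤ)) (Phi w v) := by
      rw [zpow_add_one]; rfl
    rw [hx, ih (Phi w v), h1 v]
  | pred k ih =>
    intro v
    have hx : (Phi w ^ (-(k : ℤ) - 1)) v = (Phi w ^ (-(k : ℤ))) ((Phi w)⁻¹ v) := by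
      rw [zpow_sub_one]; rfl
    rw [hx, ih ((Phi w)⁻¹ v), h2 v]

lemma sc_Mx (w : Equiv.Perm (Fin n)) {i j : Fin n}
    (h : (Phi w).SameCycle (w i) (w j)) : Mx w i = Mx w j := by
  obtain ⟨z, hz⟩ := h
  have := P_zpow w z (w i)
  rw [hz, Equiv.symm_apply_apply, Equiv.symm_apply_apply] at this
  exact this.symm

lemma sc_start (w : Equiv.Perm (Fin n)) (i : Fin n) :
    (Phi w).SameCycle (Mx w i) (w i) := by
  have key : ∀ k, ∀ i : Fin n, i.val ≤ k → (Phi w).SameCycle (Mx w i) (w i) := by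
    intro k
    induction k with
    | zero =>
      intro i hi
      have hM : Mx w i = w i := by
        refine le_antisymm (Mx_le w fun t ht => ?_) (w_le_Mx w i)
        have : t = i := Fin.ext (by have := Fin.le_def.1 ht; omega)
        rw [this]
      rw [hM]
    | succ k IH =>
      intro i hi
      by_cases hM : Mx w i = w i
      · rw [hM]
      · have h0 : i.val ≠ 0 := by
          intro h0
          exact hM (le_antisymm (Mx_le w fun t ht => by
            have : t = i := Fin.ext (by have := Fin.le_def.1 ht; omega)
            rw [this]) (w_le_Mx w i))
        have hlt : i.val - 1 < n := by have := i.isLt; omega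
        set ip : Fin n := ⟨i.val - 1, hlt⟩ with hip
        have hip1 : ip.val + 1 < n := by have := i.isLt; simp [hip]; omega
        have hii : (⟨ip.val + 1, hip1⟩ : Fin n) = i := Fin.ext (by simp [hip]; omega)
        have hle : w ⟨ip.val + 1, hip1⟩ ≤ Mx w ip := by
          by_contra hc
          apply hM
          have := Mx_succ_of_gt w hip1 hc
          rwa [hii] at this
        have hMeq : Mx w i = Mx w ip := by
          have := Mx_succ_of_le w hip1 hle
          rwa [hii] at this
        have hstep : Phi w (w ip) = w i := by rw [Phi_apply, gf_within hip1 hle, hii]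
        have hsc : (Phi w).SameCycle (w ip) (w i) := ⟨1, by simpa using hstep⟩
        rw [hMeq]
        exact (IH ip (by simp [hip]; omega)).trans hsc
  exact key i.val i le_rfl

open scoped Classical in
/-- Maximum of the cycle containing `v`. -/
noncomputable def cm (σ : Equiv.Perm (Fin n)) (v : Fin n) : Fin n :=
  (Finset.univ.filter (fun u => σ.SameCycle v u)).max'
    ⟨v, Finset.mem_filter.2 ⟨Finset.mem_univ v, Equiv.Perm.SameCycle.refl σ v⟩⟩

lemma cm_eq (w : Equiv.Perm (Fin n)) (i : Fin n) : cm (Phi w) (w i) = Mx w i := by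
  classical
  apply le_antisymm
  · apply Finset.max'_le
    intro u hu
    have hsc : (Phi w).SameCycle (w i) u := (Finset.mem_filter.1 hu).2
    have hsc' : (Phi w).SameCycle (w i) (w (w.symm u)) := by
      rwa [Equiv.apply_symm_apply]
    have hM := sc_Mx w hsc'
    calc u = w (w.symm u) := (Equiv.apply_symm_apply w u).symm
      _ ≤ Mx w (w.symm u) := w_le_Mx w _
      _ = Mx w i := hM.symm
  · apply Finset.le_max'
    exact Finset.mem_filter.2 ⟨Finset.mem_univ _, (sc_start w i).symm⟩

/-- Key: descents of the word `w` correspond to anti-excedances of `Phi w`. -/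
lemma pointwise (w : Equiv.Perm (Fin n)) (i : Fin n) :
    (∃ h : i.val + 1 < n, w ⟨i.val + 1, h⟩ < w i) ↔ Phi w (w i) < w i := by
  rw [Phi_apply]
  rcases gf_cases w i with ⟨h, hle, hg, _⟩ | ⟨hg, hend⟩
  · rw [hg]
    constructor
    · rintro ⟨h', hlt⟩; exact hlt
    · intro hlt; exact ⟨h, hlt⟩
  · rw [hg]
    constructor
    · rintro ⟨h', hlt⟩
      exact absurd (hlt.trans_le (w_le_Mx w i)) (not_lt.2 (hend h').le)
    · intro hlt
      exact absurd hlt (not_lt.2 (w_le_Mx w i))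

lemma desc_eq_exce (w : Equiv.Perm (Fin n)) : desc n w = exce n (Phi w)⁻¹ := by
  unfold desc exce
  apply Nat.card_congr
  have E1 : {i : Fin n // ∃ h : i.val + 1 < n, w ⟨i.val + 1, h⟩ < w i} ≃
      {v : Fin n // Phi w v < v} :=
    Equiv.subtypeEquiv (w : Fin n ≃ Fin n) fun i => pointwise w i
  have E2 : {v : Fin n // Phi w v < v} ≃ {i : Fin n // i < (Phi w)⁻¹ i} :=
    Equiv.subtypeEquiv (Phi w : Fin n ≃ Fin n) fun v => by
      rw [show (Phi w)⁻¹ (Phi w v) = v from (Phi w).symm_apply_apply v]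
  exact E1.trans E2

lemma Phi_inj : Function.Injective (Phi (n := n)) := by
  intro w w' hww
  have key : ∀ k, ∀ i : Fin n, n ≤ i.val + k + 1 → w i = w' i := by
    intro k
    induction k with
    | zero =>
      intro i hi
      have htop : ∀ (u : Equiv.Perm (Fin n)) (v : Fin n), v ≤ Mx u i := by
        intro u v
        have h1 : u.symm v ≤ i := Fin.le_def.2 (by have := (u.symm v).isLt; have := i.isLt; omega)
        have := le_Mx u h1
        rwa [Equiv.apply_symm_apply] at this
      have hM : Mx w i = Mx w' i := le_antisymm (htop w' _) (htop w _)
      have hni : ¬ (i.val + 1 < n) := by omega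
      have e1 : Phi w (w i) = Mx w i := by
        rw [Phi_apply]; exact gf_end fun hh => absurd hh hni
      have e2 : Phi w' (w' i) = Mx w' i := by
        rw [Phi_apply]; exact gf_end fun hh => absurd hh hni
      apply (Phi w).injective
      rw [e1, hM, ← e2, ← hww]
    | succ k IH =>
      intro i hi
      by_cases hk : n ≤ i.val + k + 1
      · exact IH i hk
      · have hj : i.val + 1 < n := by omega
        have hwj : w ⟨i.val + 1, hj⟩ = w' ⟨i.val + 1, hj⟩ := IH ⟨i.val + 1, hj⟩ (by simp; omega)
        have hcm : Mx w ⟨i.val + 1, hj⟩ = Mx w' ⟨i.val + 1, hj⟩ := by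
          rw [← cm_eq w, ← cm_eq w', hwj, hww]
        by_cases hstart : Mx w ⟨i.val + 1, hj⟩ = w ⟨i.val + 1, hj⟩
        · -- start of a block: σ (w i) = Mx w i, characterized via cycle maxima
          have hstart' : Mx w' ⟨i.val + 1, hj⟩ = w' ⟨i.val + 1, hj⟩ := by
            rw [← hcm, ← hwj]; exact hstart
          -- generic facts, proved for any u with the start property
          have hgen : ∀ u : Equiv.Perm (Fin n), Mx u ⟨i.val + 1, hj⟩ = u ⟨i.val + 1, hj⟩ →
              Phi u (u i) = Mx u i ∧
              (cm (Phi u) (Mx u i) = Mx u i ∧ Mx u i < u ⟨i.val + 1, hj⟩) ∧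
              (∀ x : Fin n, cm (Phi u) x = x → x < u ⟨i.val + 1, hj⟩ → x ≤ Mx u i) := by
            intro u hst
            have hnle : ¬ u ⟨i.val + 1, hj⟩ ≤ Mx u i := by
              intro hle
              obtain ⟨t, ht, hte⟩ := exists_Mx u i
              have h1 : u ⟨i.val + 1, hj⟩ ≤ u t := by rw [hte]; exact hle
              have h2 : u t ≤ u ⟨i.val + 1, hj⟩ := by
                rw [← hst]
                exact le_Mx u (Fin.le_def.2 (show t.val ≤ i.val + 1 from
                  (Fin.le_def.1 ht).trans (Nat.le_succ _)))
              have : t = ⟨i.val + 1, hj⟩ := u.injective (le_antisymm h2 h1)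
              subst this
              have hv : i.val + 1 ≤ i.val := Fin.le_def.1 ht
              omega
            refine ⟨?_, ⟨?_, ?_⟩, ?_⟩
            · rw [Phi_apply]; exact gf_end fun hh => hnle
            · -- cm of Mx u i is itself
              have hbs := Mx_symm_Mx u i
              have := cm_eq u (u.symm (Mx u i))
              rwa [Equiv.apply_symm_apply, hbs] at this
            · -- Mx u i < u j
              have h1 : Mx u i ≤ Mx u ⟨i.val + 1, hj⟩ :=
                Mx_mono u (Fin.le_def.2 (Nat.le_succ _))
              rw [hst] at h1
              rcases h1.lt_or_eq with h | h
              · exact h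
              · exact absurd h (Mx_ne_of_lt u (Nat.lt_succ_self _))
            · intro x hcx hxlt
              have hx : x = u (u.symm x) := (Equiv.apply_symm_apply u x).symm
              rw [hx] at hcx
              rw [cm_eq u] at hcx
              by_cases hti : u.symm x ≤ i
              · rw [hx]; exact le_Mx u hti
              · exfalso
                have hji : (⟨i.val + 1, hj⟩ : Fin n) ≤ u.symm x :=
                  Fin.le_def.2 (show i.val + 1 ≤ (u.symm x).val from Fin.lt_def.1 (lt_of_not_ge hti))
                have h1 : Mx u ⟨i.val + 1, hj⟩ ≤ Mx u (u.symm x) := Mx_mono u hji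
                rw [hst, hcx, ← hx] at h1
                exact absurd hxlt (not_lt.2 h1)
          obtain ⟨e1, ⟨hm1, hl1⟩, hb1⟩ := hgen w hstart
          obtain ⟨e2, ⟨hm2, hl2⟩, hb2⟩ := hgen w' hstart'
          rw [hww] at hm1 hb1
          rw [hwj] at hl1 hb1
          have hMeq : Mx w i = Mx w' i :=
            le_antisymm (hb2 _ hm1 hl1) (hb1 _ hm2 hl2)
          apply (Phi w).injective
          rw [e1, hMeq, ← e2, ← hww]
        · -- not a start: σ (w i) = w j
          have hstart'2 : ¬ Mx w' ⟨i.val + 1, hj⟩ = w' ⟨i.val + 1, hj⟩ := by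
            rw [← hcm, ← hwj]; exact hstart
          have hgen : ∀ u : Equiv.Perm (Fin n), ¬ Mx u ⟨i.val + 1, hj⟩ = u ⟨i.val + 1, hj⟩ →
              Phi u (u i) = u ⟨i.val + 1, hj⟩ := by
            intro u hst
            have hle : u ⟨i.val + 1, hj⟩ ≤ Mx u i := by
              by_contra hc
              exact hst (Mx_succ_of_gt u hj hc)
            rw [Phi_apply]; exact gf_within hj hle
          have e1 := hgen w hstart
          have e2 := hgen w' hstart'2
          apply (Phi w).injective
          rw [e1, hwj, ← e2, ← hww]
  apply Equiv.ext
  intro i0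
  exact key n i0 (by omega)

end FoataProof

theorem eulerian_descents_eq_excedances (n m : ℕ) :
    Nat.card {σ : Equiv.Perm (Fin n) // desc n σ = m} =
      Nat.card {σ : Equiv.Perm (Fin n) // exce n σ = m} := by
  have hinj : Function.Injective (fun w : Equiv.Perm (Fin n) => (FoataProof.Phi w)⁻¹) := by
    intro a b h
    exact FoataProof.Phi_inj (inv_injective h)
  have hbij := Finite.injective_iff_bijective.1 hinj
  apply Nat.card_congr
  refine Equiv.subtypeEquiv (Equiv.ofBijective _ hbij) fun w => ?_
  rw [FoataProof.desc_eq_exce w]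
  exact Iff.rfl
end

section
/- Worpitzky's identity: A_n(x)/(1-x)^{n+1} = Σ_{m≥0} (m+1)^n x^m as formal power series, where A_n(x) is the n-th Eulerian polynomial. -/
open Finset



lemma aux_card_strictMono (a b : ℕ) :
    Nat.card {f : Fin a → Fin b // StrictMono f} = b.choose a := by
  classical
  have e : {f : Fin a → Fin b // StrictMono f} ≃ {s : Finset (Fin b) // s.card = a} :=
    { toFun := fun f => ⟨Finset.image f.1 univ, by
        rw [Finset.card_image_of_injective _ f.2.injective, card_univ, Fintype.card_fin]⟩
      invFun := fun s => ⟨fun i => s.1.orderEmbOfFin s.2 i, (s.1.orderEmbOfFin s.2).strictMono⟩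
      left_inv := fun f => by
        apply Subtype.ext
        exact (Finset.orderEmbOfFin_unique _
          (fun x => Finset.mem_image_of_mem _ (mem_univ x)) f.2).symm
      right_inv := fun s => by
        apply Subtype.ext
        apply Finset.coe_injective
        rw [coe_image, coe_univ, Set.image_univ]
        exact Finset.range_orderEmbOfFin s.1 s.2 }
  rw [Nat.card_congr e, Nat.card_eq_fintype_card, Fintype.card_finset_len, Fintype.card_fin]

lemma aux_strictMono_of_adj {n : ℕ} {α : Type*} [Preorder α] {f : Fin n → α}
    (h : ∀ j (hj : j + 1 < n), f ⟨j, Nat.lt_of_succ_lt hj⟩ < f ⟨j + 1, hj⟩) :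
    StrictMono f := by
  have key : ∀ k (i : Fin n) (hk : i.1 + k < n), 0 < k → f i < f ⟨i.1 + k, hk⟩ := by
    intro k
    induction k with
    | zero => intro i hk h0; exact absurd h0 (lt_irrefl 0)
    | succ k ih =>
      intro i hk _
      rcases Nat.eq_zero_or_pos k with rfl | hkpos
      · have := h i.1 (by omega)
        simpa using this
      · exact (ih i (by omega) hkpos).trans (h (i.1 + k) hk)
  intro i j hij
  have hj : i.1 + (j.1 - i.1) < n := by omega
  have := key (j.1 - i.1) i hj (by omega)
  have hjj : j = (⟨i.1 + (j.1 - i.1), hj⟩ : Fin n) := by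
    apply Fin.ext; simp; omega
  rwa [← hjj] at this

lemma aux_monotone_of_adj {n : ℕ} {α : Type*} [Preorder α] {f : Fin n → α}
    (h : ∀ j (hj : j + 1 < n), f ⟨j, Nat.lt_of_succ_lt hj⟩ ≤ f ⟨j + 1, hj⟩) :
    Monotone f := by
  have key : ∀ k (i : Fin n) (hk : i.1 + k < n), f i ≤ f ⟨i.1 + k, hk⟩ := by
    intro k
    induction k with
    | zero => intro i hk; exact le_of_eq (by congr)
    | succ k ih =>
      intro i hk
      exact (ih i (by omega)).trans (h (i.1 + k) hk)
  intro i j hij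
  have hj : i.1 + (j.1 - i.1) < n := by omega
  have := key (j.1 - i.1) i hj
  have hjj : j = (⟨i.1 + (j.1 - i.1), hj⟩ : Fin n) := by
    apply Fin.ext; simp; omega
  rwa [← hjj] at this

lemma aux_strictMono_le {n N : ℕ} {F : Fin n → Fin N} (hF : StrictMono F)
    {i j : Fin n} (hij : i ≤ j) : (F i).1 + (j.1 - i.1) ≤ (F j).1 := by
  have key : ∀ k (i : Fin n) (hk : i.1 + k < n), (F i).1 + k ≤ (F ⟨i.1 + k, hk⟩).1 := by
    intro k
    induction k with
    | zero => intro i hk; simp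
    | succ k ih =>
      intro i hk
      have h1 := ih i (by omega)
      have h2 : F ⟨i.1 + k, by omega⟩ < F ⟨i.1 + (k+1), hk⟩ := by
        apply hF; simp [Fin.lt_def]
      omega
  have hj : i.1 + (j.1 - i.1) < n := by omega
  have := key (j.1 - i.1) i hj
  have hjj : j = (⟨i.1 + (j.1 - i.1), hj⟩ : Fin n) := by
    apply Fin.ext; simp; omega
  conv_rhs => rw [hjj]
  exact this

namespace WpAux
open scoped Classical
variable {n m : ℕ}
def dsc (σ : Equiv.Perm (Fin n)) (j : ℕ) : Prop :=
  ∃ h : j + 1 < n, σ ⟨j + 1, h⟩ < σ ⟨j, Nat.lt_of_succ_lt h⟩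

noncomputable def dcard (σ : Equiv.Perm (Fin n)) : ℕ := ((range n).filter (dsc σ)).card

noncomputable def tval (σ : Equiv.Perm (Fin n)) (i : ℕ) : ℕ :=
  ((range i).filter (fun j => ¬ dsc σ j)).card

def cond (σ : Equiv.Perm (Fin n)) (g : Fin n → Fin (m + 1)) : Prop :=
  Monotone g ∧ ∀ j (hj : j + 1 < n), σ ⟨j + 1, hj⟩ < σ ⟨j, Nat.lt_of_succ_lt hj⟩ →
    g ⟨j, Nat.lt_of_succ_lt hj⟩ < g ⟨j + 1, hj⟩

lemma desc_eq_dcard (σ : Equiv.Perm (Fin n)) : desc n σ = dcard σ := by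
  have h1 : ∀ i : Fin n, (∃ h : i.val + 1 < n, σ ⟨i.val + 1, h⟩ < σ i) ↔ dsc σ i.1 := by
    intro i
    simp [dsc]
  rw [desc, Nat.card_congr (Equiv.subtypeEquivRight h1), Nat.card_eq_fintype_card,
    Fintype.card_subtype]
  apply Finset.card_bij (fun (a : Fin n) _ => a.1)
  · intro a ha
    simp only [mem_filter, mem_univ, true_and] at ha
    simp [ha, a.2]
  · intro a _ b _ hab
    exact Fin.ext hab
  · intro b hb
    simp only [mem_filter, mem_range] at hb
    exact ⟨⟨b, hb.1⟩, by simp [hb.2], rfl⟩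

lemma dcard_le (σ : Equiv.Perm (Fin n)) : dcard σ ≤ n - 1 := by
  have : (range n).filter (dsc σ) ⊆ range (n - 1) := by
    intro j hj
    simp only [mem_filter, mem_range] at hj
    obtain ⟨h, -⟩ := hj.2
    simp only [mem_range]
    omega
  calc dcard σ ≤ (range (n-1)).card := Finset.card_le_card this
  _ = n - 1 := card_range _

lemma tval_le_self (σ : Equiv.Perm (Fin n)) (i : ℕ) : tval σ i ≤ i := by
  calc tval σ i ≤ (range i).card := Finset.card_le_card (filter_subset _ _)
  _ = i := card_range _

lemma tval_mono (σ : Equiv.Perm (Fin n)) {i j : ℕ} (hij : i ≤ j) : tval σ i ≤ tval σ j :=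
  Finset.card_le_card (filter_subset_filter _ (Finset.range_subset_range.2 hij))

lemma tval_add_dsc (σ : Equiv.Perm (Fin n)) {i : ℕ} (hi : i ≤ n) :
    i ≤ tval σ i + dcard σ := by
  have h1 : tval σ i + ((range i).filter (dsc σ)).card = i := by
    rw [tval, add_comm, Finset.card_filter_add_card_filter_not, card_range]
  have h2 : ((range i).filter (dsc σ)).card ≤ dcard σ :=
    Finset.card_le_card (filter_subset_filter _ (Finset.range_subset_range.2 hi))
  omega

lemma tval_max (σ : Equiv.Perm (Fin n)) : tval σ (n - 1) + dcard σ = n - 1 := by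
  have h0 : (range n).filter (dsc σ) = (range (n-1)).filter (dsc σ) := by
    apply Finset.ext
    intro j
    simp only [mem_filter, mem_range]
    constructor
    · rintro ⟨h1, h2⟩
      refine ⟨?_, h2⟩
      obtain ⟨hh, -⟩ := h2
      omega
    · rintro ⟨h1, h2⟩; exact ⟨by omega, h2⟩
  rw [dcard, h0, tval, add_comm, Finset.card_filter_add_card_filter_not, card_range]

lemma tval_succ (σ : Equiv.Perm (Fin n)) (j : ℕ) :
    tval σ (j + 1) = tval σ j + (if dsc σ j then 0 else 1) := by
  rw [tval, Finset.range_add_one, Finset.filter_insert]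
  split
  · next h =>
    rw [Finset.card_insert_of_notMem (by simp)]
    simp [tval, if_neg (by exact h)]
  · next h =>
    simp [tval, not_not.mp h]

lemma chain {σ : Equiv.Perm (Fin n)} {g : Fin n → Fin (m + 1)} (hc : cond σ g) :
    ∀ i j : Fin n, i < j → g i = g j → σ i < σ j := by
  intro i j hij heq
  have hij' : i.1 < j.1 := hij
  have key : ∀ k (hk : i.1 + k < n), i.1 + k ≤ j.1 → σ i < σ ⟨i.1 + k, hk⟩ ∨ k = 0 := by
    intro k
    induction k with
    | zero => intro _ _; right; rfl
    | succ k ih =>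
      intro hk hkj
      have hk' : i.1 + k < n := by omega
      have hprev := ih hk' (by omega)
      have hg1 : g i ≤ g ⟨i.1 + k, hk'⟩ :=
        hc.1 (show (⟨i.1, i.2⟩ : Fin n) ≤ ⟨i.1 + k, hk'⟩ from Fin.mk_le_mk.2 (by omega))
      have hg2 : g ⟨i.1 + k, hk'⟩ ≤ g ⟨i.1 + k + 1, hk⟩ :=
        hc.1 (Fin.mk_le_mk.2 (by omega))
      have hg3 : g ⟨i.1 + k + 1, hk⟩ ≤ g i := by
        rw [heq]
        exact hc.1 (show (⟨i.1 + k + 1, hk⟩ : Fin n) ≤ ⟨j.1, j.2⟩ from Fin.mk_le_mk.2 (by omega))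
      have heq2 : g ⟨i.1 + k, hk'⟩ = g ⟨i.1 + k + 1, hk⟩ :=
        le_antisymm hg2 (hg3.trans hg1)
      have hnd : ¬ σ ⟨i.1 + k + 1, hk⟩ < σ ⟨i.1 + k, hk'⟩ := by
        intro hlt
        have := hc.2 (i.1 + k) hk hlt
        rw [heq2] at this
        exact lt_irrefl _ this
      have hne : σ ⟨i.1 + k, hk'⟩ ≠ σ ⟨i.1 + k + 1, hk⟩ := by
        intro hh
        have := σ.injective hh
        rw [Fin.mk.injEq] at this
        omega
      have hstep : σ ⟨i.1 + k, hk'⟩ < σ ⟨i.1 + k + 1, hk⟩ :=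
        lt_of_le_of_ne (not_lt.1 hnd) hne
      left
      rcases hprev with h | h0
      · exact h.trans hstep
      · subst h0
        exact hstep
  have hn : i.1 + (j.1 - i.1) < n := by omega
  have := key (j.1 - i.1) hn (by omega)
  rcases this with h | h0
  · have hjj : j = (⟨i.1 + (j.1 - i.1), hn⟩ : Fin n) := by
      apply Fin.ext; simp; omega
    rwa [← hjj] at h
  · omega

lemma sort_eq {σ : Equiv.Perm (Fin n)} {g : Fin n → Fin (m + 1)} (hg : cond σ g) :
    Tuple.sort (g ∘ ⇑σ.symm) = σ := by
  symm
  rw [Tuple.eq_sort_iff]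
  constructor
  · have h1 : (g ∘ ⇑σ.symm) ∘ ⇑σ = g := by funext x; simp
    rw [h1]
    exact hg.1
  · intro i j hij heq2
    apply chain hg i j hij
    simpa using heq2

lemma sum_card (n m : ℕ) :
    (m + 1) ^ n = ∑ σ : Equiv.Perm (Fin n),
      Nat.card {g : Fin n → Fin (m + 1) // cond σ g} := by
  classical
  have hb : Function.Bijective
      (fun x : Σ σ : Equiv.Perm (Fin n), {g : Fin n → Fin (m + 1) // cond σ g} =>
        (x.2.1 ∘ ⇑x.1.symm : Fin n → Fin (m + 1))) := by
    constructor
    · rintro ⟨σ, g, hg⟩ ⟨τ, h, hh⟩ heq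
      simp only at heq
      have hστ : σ = τ := by
        rw [← sort_eq hg, ← sort_eq hh, heq]
      subst hστ
      have hgh : g = h := by
        funext x
        have := congrFun heq (σ x)
        simpa using this
      subst hgh
      rfl
    · intro f
      have hs := (Tuple.eq_sort_iff (σ := Tuple.sort f) (f := f)).1 rfl
      refine ⟨⟨Tuple.sort f, ⟨f ∘ ⇑(Tuple.sort f), ⟨hs.1, ?_⟩⟩⟩, ?_⟩
      · intro j hj hlt
        have hle : f (Tuple.sort f ⟨j, Nat.lt_of_succ_lt hj⟩) ≤ f (Tuple.sort f ⟨j + 1, hj⟩) :=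
          hs.1 (by simp [Fin.le_def])
        rcases lt_or_eq_of_le hle with h2 | h2
        · exact h2
        · exfalso
          have := hs.2 ⟨j, Nat.lt_of_succ_lt hj⟩ ⟨j + 1, hj⟩ (by simp [Fin.lt_def]) h2
          exact absurd hlt (asymm this)
      · funext x
        simp
  calc (m + 1) ^ n = Nat.card (Fin n → Fin (m + 1)) := by
        simp [Nat.card_eq_fintype_card]
  _ = Nat.card (Σ σ : Equiv.Perm (Fin n), {g : Fin n → Fin (m + 1) // cond σ g}) :=
        (Nat.card_eq_of_bijective _ hb).symm
  _ = ∑ σ : Equiv.Perm (Fin n), Nat.card {g : Fin n → Fin (m + 1) // cond σ g} := by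
        rw [Nat.card_eq_fintype_card, Fintype.card_sigma]
        exact Finset.sum_congr rfl fun σ _ => (Nat.card_eq_fintype_card).symm


lemma card_cond (σ : Equiv.Perm (Fin n)) :
    Nat.card {g : Fin n → Fin (m + 1) // cond σ g} = (m + n - desc n σ).choose n := by
  rw [desc_eq_dcard]
  have hdle : dcard σ ≤ n - 1 := dcard_le σ
  have e : {g : Fin n → Fin (m + 1) // cond σ g} ≃
      {h : Fin n → Fin (m + n - dcard σ) // StrictMono h} :=
    { toFun := fun g => ⟨fun i => ⟨(g.1 i).1 + tval σ i.1, by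
        have h1 : (g.1 i).1 < m + 1 := (g.1 i).2
        have h2 : tval σ i.1 ≤ tval σ (n - 1) := tval_mono σ (by omega)
        have h3 := tval_max σ
        have h4 : i.1 < n := i.2
        omega⟩, by
        apply aux_strictMono_of_adj
        intro j hj
        simp only [Fin.mk_lt_mk]
        by_cases hds : dsc σ j
        · obtain ⟨h', hlt⟩ := hds
          have hgl : g.1 ⟨j, Nat.lt_of_succ_lt hj⟩ < g.1 ⟨j + 1, hj⟩ := g.2.2 j hj hlt
          have ht : tval σ (j + 1) = tval σ j + (if dsc σ j then 0 else 1) := tval_succ σ j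
          rw [if_pos ⟨h', hlt⟩] at ht
          have := (Fin.lt_def).1 hgl
          omega
        · have hgle : g.1 ⟨j, Nat.lt_of_succ_lt hj⟩ ≤ g.1 ⟨j + 1, hj⟩ :=
            g.2.1 (by simp [Fin.le_def])
          have ht : tval σ (j + 1) = tval σ j + (if dsc σ j then 0 else 1) := tval_succ σ j
          rw [if_neg hds] at ht
          have := (Fin.le_def).1 hgle
          omega⟩
      invFun := fun h => ⟨fun i => ⟨(h.1 i).1 - tval σ i.1, by
        have hn : 0 < n := i.pos
        have hA := aux_strictMono_le h.2 (i := i) (j := ⟨n - 1, by omega⟩) (by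
          rw [Fin.le_def]; exact Nat.le_sub_one_of_lt i.2)
        have hB : (h.1 ⟨n - 1, by omega⟩).1 < m + n - dcard σ := (h.1 _).2
        have hC : i.1 ≤ tval σ i.1 + dcard σ := tval_add_dsc σ (le_of_lt i.2)
        have h4 : i.1 < n := i.2
        simp only at hA
        omega⟩, by
        constructor
        · apply aux_monotone_of_adj
          intro j hj
          simp only [Fin.mk_le_mk]
          have hab : (h.1 ⟨j, Nat.lt_of_succ_lt hj⟩).1 < (h.1 ⟨j + 1, hj⟩).1 :=
            (Fin.lt_def).1 (h.2 (by simp [Fin.lt_def]))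
          have ht : tval σ (j + 1) = tval σ j + (if dsc σ j then 0 else 1) := tval_succ σ j
          have htj : tval σ j ≤ j := tval_le_self σ j
          have haj : j ≤ (h.1 ⟨j, Nat.lt_of_succ_lt hj⟩).1 := by
            have := aux_strictMono_le h.2 (i := ⟨0, by omega⟩) (j := ⟨j, Nat.lt_of_succ_lt hj⟩)
              (by simp [Fin.le_def])
            simp only at this
            omega
          by_cases hds : dsc σ j
          · rw [if_pos hds] at ht; omega
          · rw [if_neg hds] at ht; omega
        · intro j hj hlt
          simp only [Fin.mk_lt_mk]
          have hab : (h.1 ⟨j, Nat.lt_of_succ_lt hj⟩).1 < (h.1 ⟨j + 1, hj⟩).1 :=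
            (Fin.lt_def).1 (h.2 (by simp [Fin.lt_def]))
          have ht : tval σ (j + 1) = tval σ j + (if dsc σ j then 0 else 1) := tval_succ σ j
          have htj : tval σ j ≤ j := tval_le_self σ j
          have haj : j ≤ (h.1 ⟨j, Nat.lt_of_succ_lt hj⟩).1 := by
            have := aux_strictMono_le h.2 (i := ⟨0, by omega⟩) (j := ⟨j, Nat.lt_of_succ_lt hj⟩)
              (by simp [Fin.le_def])
            simp only at this
            omega
          rw [if_pos ⟨hj, hlt⟩] at ht
          omega⟩
      left_inv := fun g => by
        apply Subtype.ext
        funext i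
        apply Fin.ext
        simp
      right_inv := fun h => by
        apply Subtype.ext
        funext i
        apply Fin.ext
        have hn : 0 < n := i.pos
        have htj : tval σ i.1 ≤ i.1 := tval_le_self σ i.1
        have haj : i.1 ≤ (h.1 i).1 := by
          have := aux_strictMono_le h.2 (i := ⟨0, by omega⟩) (j := i) (by simp [Fin.le_def])
          simp only at this
          omega
        simp only
        omega }
  rw [Nat.card_congr e, aux_card_strictMono]

lemma desc_le (σ : Equiv.Perm (Fin n)) : desc n σ ≤ n - 1 := by
  rw [desc_eq_dcard]; exact dcard_le σ

lemma core (n m : ℕ) :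
    (m + 1) ^ n = ∑ σ : Equiv.Perm (Fin n), (m + n - desc n σ).choose n := by
  rw [sum_card n m]
  exact Finset.sum_congr rfl fun σ _ => card_cond σ

end WpAux

theorem worpitzky (n : ℕ) :
    ((∑ σ : Equiv.Perm (Fin n), Polynomial.X ^ desc n σ : Polynomial ℤ) : PowerSeries ℤ) =
      (1 - PowerSeries.X) ^ (n + 1) * PowerSeries.mk (fun m => ((m : ℤ) + 1) ^ n) := by
  classical
  set A : Polynomial ℤ := ∑ σ : Equiv.Perm (Fin n), Polynomial.X ^ desc n σ with hA
  have key : (A : PowerSeries ℤ) * (PowerSeries.invOneSubPow ℤ (n + 1)).val =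
      PowerSeries.mk (fun m => ((m : ℤ) + 1) ^ n) := by
    rw [PowerSeries.invOneSubPow_val_succ_eq_mk_add_choose]
    ext m
    rw [PowerSeries.coeff_mul, PowerSeries.coeff_mk,
      Finset.Nat.sum_antidiagonal_eq_sum_range_succ_mk]
    have hterm : ∀ k ∈ Finset.range (m + 1),
        (PowerSeries.coeff k) (A : PowerSeries ℤ) *
          (PowerSeries.coeff (m - k)) (PowerSeries.mk fun j => ((n + j).choose n : ℤ)) =
        ∑ σ : Equiv.Perm (Fin n),
          (if desc n σ = k then (((n + (m - k)).choose n : ℕ) : ℤ) else 0) := by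
      intro k _
      rw [Polynomial.coeff_coe, PowerSeries.coeff_mk, hA, Polynomial.finset_sum_coeff,
        Finset.sum_mul]
      apply Finset.sum_congr rfl
      intro σ _
      rw [Polynomial.coeff_X_pow]
      by_cases h : desc n σ = k
      · simp [h]
      · rw [if_neg (fun hh => h hh.symm), if_neg h, zero_mul]
    calc (∑ k ∈ Finset.range (m + 1), (PowerSeries.coeff k) (A : PowerSeries ℤ) *
            (PowerSeries.coeff (m - k)) (PowerSeries.mk fun j => ((n + j).choose n : ℤ)))
        = ∑ k ∈ Finset.range (m + 1), ∑ σ : Equiv.Perm (Fin n),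
            (if desc n σ = k then (((n + (m - k)).choose n : ℕ) : ℤ) else 0) :=
          Finset.sum_congr rfl hterm
      _ = ∑ σ : Equiv.Perm (Fin n), ∑ k ∈ Finset.range (m + 1),
            (if desc n σ = k then (((n + (m - k)).choose n : ℕ) : ℤ) else 0) :=
          Finset.sum_comm
      _ = ∑ σ : Equiv.Perm (Fin n), (((m + n - desc n σ).choose n : ℕ) : ℤ) := by
          apply Finset.sum_congr rfl
          intro σ _
          rw [Finset.sum_ite_eq]
          have hd := WpAux.desc_le σ
          by_cases hle : desc n σ ≤ m
          · rw [if_pos (Finset.mem_range.2 (by omega))]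
            congr 2
            omega
          · rw [if_neg (by simp only [Finset.mem_range]; omega)]
            have h0 : m + n - desc n σ < n := by omega
            simp [Nat.choose_eq_zero_of_lt h0]
      _ = ((m : ℤ) + 1) ^ n := by
          rw [← Nat.cast_sum, ← WpAux.core n m]
          push_cast
          ring
  have hu : ((1 : PowerSeries ℤ) - PowerSeries.X) ^ (n + 1) *
      (PowerSeries.invOneSubPow ℤ (n + 1)).val = 1 := by
    rw [← PowerSeries.invOneSubPow_inv_eq_one_sub_pow]
    exact (PowerSeries.invOneSubPow ℤ (n + 1)).inv_val
  calc (A : PowerSeries ℤ)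
      = (A : PowerSeries ℤ) * (((1 : PowerSeries ℤ) - PowerSeries.X) ^ (n + 1) *
          (PowerSeries.invOneSubPow ℤ (n + 1)).val) := by rw [hu, mul_one]
    _ = (1 - PowerSeries.X) ^ (n + 1) *
          ((A : PowerSeries ℤ) * (PowerSeries.invOneSubPow ℤ (n + 1)).val) := by ring
    _ = (1 - PowerSeries.X) ^ (n + 1) * PowerSeries.mk (fun m => ((m : ℤ) + 1) ^ n) := by
        rw [key]
end

section
/- If X and Y are directed acyclic graphs on n vertices, then DFS(X,Y) is acyclic. -/
open scoped Classical in
private lemma rank_mono {n : ℕ} (R : Fin n → Fin n → Prop) (hR : ∀ a, ¬ Relation.TransGen R a a)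
    {a b : Fin n} (h : R a b) :
    (Finset.univ.filter (fun c => Relation.TransGen R c a)).card <
    (Finset.univ.filter (fun c => Relation.TransGen R c b)).card := by
  apply Finset.card_lt_card
  constructor
  · intro c hc
    simp only [Finset.mem_filter, Finset.mem_univ, true_and] at *
    exact hc.tail h
  · intro hsub
    have ha : a ∈ Finset.univ.filter (fun c => Relation.TransGen R c b) :=
      Finset.mem_filter.2 ⟨Finset.mem_univ _, Relation.TransGen.single h⟩
    have := Finset.mem_filter.1 (hsub ha)
    exact hR a this.2

theorem dfs_acyclic (n : ℕ) (X Y : Fin n → Fin n → Prop)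
    (hX : ∀ a, ¬ Relation.TransGen X a a) (hY : ∀ a, ¬ Relation.TransGen Y a a) :
    ∀ σ : Fin n ≃ Fin n, ¬ Relation.TransGen (dfsAdj X Y) σ σ := by
  classical
  set fX : Fin n → ℕ := fun v => (Finset.univ.filter (fun c => Relation.TransGen X c v)).card with hfX
  set fY : Fin n → ℕ := fun v => (Finset.univ.filter (fun c => Relation.TransGen Y c v)).card with hfY
  set Φ : (Fin n ≃ Fin n) → ℤ := fun σ => ∑ u : Fin n, (2:ℤ)^(fX u) * (fY (σ u) : ℤ) with hΦ
  have key : ∀ σ φ : Fin n ≃ Fin n, dfsAdj X Y σ φ → Φ φ < Φ σ := by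
    rintro σ φ ⟨a, b, hab, hYab, rfl⟩
    have hXa : fX a < fX b := rank_mono X hX hab
    have hYa : fY (σ a) < fY (σ b) := rank_mono Y hY hYab
    have hne : a ≠ b := by
      rintro rfl; exact lt_irrefl _ hXa
    have hdiff : Φ σ - Φ ((Equiv.swap a b).trans σ)
        = ((2:ℤ)^(fX b) - 2^(fX a)) * ((fY (σ b) : ℤ) - fY (σ a)) := by
      have hzero : ∀ u ∈ Finset.univ, u ∉ ({a, b} : Finset (Fin n)) →
          (2:ℤ)^(fX u) * (fY (σ u) : ℤ) - 2^(fX u) * (fY (σ (Equiv.swap a b u)) : ℤ) = 0 := by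
        intro u _ hu
        simp only [Finset.mem_insert, Finset.mem_singleton, not_or] at hu
        rw [Equiv.swap_apply_of_ne_of_ne hu.1 hu.2]
        ring
      have hsum : Φ σ - Φ ((Equiv.swap a b).trans σ)
          = ∑ u : Fin n, ((2:ℤ)^(fX u) * (fY (σ u) : ℤ)
              - 2^(fX u) * (fY (σ (Equiv.swap a b u)) : ℤ)) := by
        simp [hΦ, Finset.sum_sub_distrib, Equiv.trans_apply]
      rw [hsum, ← Finset.sum_subset (Finset.subset_univ ({a, b} : Finset (Fin n)))
        (by intro u hu h2; exact hzero u hu h2)]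
      rw [Finset.sum_pair hne, Equiv.swap_apply_left, Equiv.swap_apply_right]
      ring
    have hpos : 0 < ((2:ℤ)^(fX b) - 2^(fX a)) * ((fY (σ b) : ℤ) - fY (σ a)) := by
      apply mul_pos
      · have : (2:ℤ)^(fX a) < 2^(fX b) := by
          exact pow_lt_pow_right₀ (by norm_num) hXa
        linarith
      · have : (fY (σ a) : ℤ) < fY (σ b) := by exact_mod_cast hYa
        linarith
    linarith [hdiff, hpos]
  have main : ∀ σ φ : Fin n ≃ Fin n, Relation.TransGen (dfsAdj X Y) σ φ → Φ φ < Φ σ := by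
    intro σ φ h
    induction h with
    | single h => exact key _ _ h
    | tail _ h ih => exact lt_trans (key _ _ h) ih
  intro σ h
  exact lt_irrefl _ (main σ σ h)
end

section
/- The directed friends-and-seats graph DFS(Tour_n, Tour_n) is acyclic; concretely, the function f(σ) = Σ_{i=1}^n i·σ(i) strictly decreases along every directed edge of DFS(Tour_n, Tour_n). -/
theorem dfs_tour_tour_acyclic (n : ℕ) :
    (∀ σ φ : Fin n ≃ Fin n, dfsAdj (Tour n) (Tour n) σ φ →
        (∑ i : Fin n, ((i.val : ℤ) + 1) * (((φ i).val : ℤ) + 1)) <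
          ∑ i : Fin n, ((i.val : ℤ) + 1) * (((σ i).val : ℤ) + 1)) ∧
      ∀ σ : Fin n ≃ Fin n, ¬ Relation.TransGen (dfsAdj (Tour n) (Tour n)) σ σ := by
  have key : ∀ σ φ : Fin n ≃ Fin n, dfsAdj (Tour n) (Tour n) σ φ →
      (∑ i : Fin n, ((i.val : ℤ) + 1) * (((φ i).val : ℤ) + 1)) <
        ∑ i : Fin n, ((i.val : ℤ) + 1) * (((σ i).val : ℤ) + 1) := by
    intro σ φ ⟨a, b, hX, hY, hφ⟩
    have hab : b ≠ a := ne_of_lt hX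
    have hba : a ≠ b := hab.symm
    set F : Fin n → (Fin n → Fin n) → ℤ :=
      fun i g => ((i.val : ℤ) + 1) * (((g i).val : ℤ) + 1) with hF
    have hsplit : ∀ g : Fin n → Fin n,
        ∑ i : Fin n, F i g = (∑ i ∈ (Finset.univ.erase a).erase b, F i g) + F b g + F a g := by
      intro g
      rw [Finset.sum_erase_add _ _ (Finset.mem_erase.mpr ⟨hab, Finset.mem_univ b⟩),
        Finset.sum_erase_add _ _ (Finset.mem_univ a)]
    have heq : ∀ i ∈ (Finset.univ.erase a).erase b, F i φ = F i σ := by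
      intro i hi
      simp only [Finset.mem_erase] at hi
      simp [hφ, F, Equiv.swap_apply_of_ne_of_ne hi.2.1 hi.1]
    have hφa : φ a = σ b := by simp [hφ]
    have hφb : φ b = σ a := by simp [hφ]
    rw [show (∑ i : Fin n, ((i.val : ℤ) + 1) * (((φ i).val : ℤ) + 1)) = ∑ i : Fin n, F i φ from rfl,
      show (∑ i : Fin n, ((i.val : ℤ) + 1) * (((σ i).val : ℤ) + 1)) = ∑ i : Fin n, F i σ from rfl,
      hsplit φ, hsplit σ, Finset.sum_congr rfl heq]
    have h1 : (b.val : ℤ) < a.val := by exact_mod_cast hX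
    have h2 : ((σ b).val : ℤ) < (σ a).val := by exact_mod_cast hY
    simp only [F, hφa, hφb]
    nlinarith
  refine ⟨key, fun σ h => ?_⟩
  have : ∀ φ : Fin n ≃ Fin n, Relation.TransGen (dfsAdj (Tour n) (Tour n)) σ φ →
      (∑ i : Fin n, ((i.val : ℤ) + 1) * (((φ i).val : ℤ) + 1)) <
        ∑ i : Fin n, ((i.val : ℤ) + 1) * (((σ i).val : ℤ) + 1) := by
    intro φ h
    induction h with
    | single h => exact key _ _ h
    | tail _ h ih => exact (key _ _ h).trans ih
  exact lt_irrefl _ (this σ h)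
end

section
/- For any directed graphs X, Y on n vertices, ODP(X,Y) = ODP(Y,X). -/
lemma dfsAdj_symm {α β : Type*} [DecidableEq α] [DecidableEq β]
    (X : α → α → Prop) (Y : β → β → Prop) (σ φ : α ≃ β)
    (h : dfsAdj X Y σ φ) : dfsAdj Y X σ.symm φ.symm := by
  obtain ⟨a, b, hX, hY, rfl⟩ := h
  refine ⟨σ a, σ b, hY, by simpa using hX, ?_⟩
  ext x
  simp only [Equiv.symm_trans_apply, Equiv.symm_symm, Equiv.symm_swap, Equiv.trans_apply]
  simp [Equiv.swap_apply_def, apply_ite σ.symm, Equiv.symm_apply_eq]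

lemma outdeg_symm {α β : Type*} [DecidableEq α] [DecidableEq β]
    (X : α → α → Prop) (Y : β → β → Prop) (σ : α ≃ β) :
    outdeg X Y σ = outdeg Y X σ.symm := by
  unfold outdeg
  refine Nat.card_congr ⟨fun p => ⟨p.1.symm, dfsAdj_symm X Y σ p.1 p.2⟩,
    fun p => ⟨p.1.symm, by simpa using dfsAdj_symm Y X σ.symm p.1 p.2⟩, ?_, ?_⟩ <;>
  · intro p; simp

theorem odp_symm (n : ℕ) (X Y : Fin n → Fin n → Prop) : ODP X Y = ODP Y X := by
  unfold ODP
  refine Fintype.sum_equiv ⟨Equiv.symm, Equiv.symm, fun _ => by simp, fun _ => by simp⟩ _ _ ?_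
  intro σ
  rw [outdeg_symm]
  rfl
end

section
/- For all positive integers n, ODP(Tour_n, Cycle_n)/(1−x)^n = n Σ_{m≥0} m^{n−1} x^m (with the convention 0^0 = 1); equivalently, the cyclic Eulerian polynomial C_n(x) = Σ_{σ ∈ S_n} x^{cdes(σ)} satisfies C_n(x)/(1−x)^n = n Σ_{m≥0} m^{n−1} x^m. -/
-- ===== auxiliary development =====

open Finset



lemma card_strictMonoFun (N R : ℕ) :
    Nat.card {e : Fin N → Fin R // StrictMono e} = R.choose N := by
  have e : {e : Fin N → Fin R // StrictMono e} ≃ {s : Finset (Fin R) // s.card = N} :=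
    { toFun := fun f => ⟨Finset.univ.image f.1, by
        rw [Finset.card_image_of_injective _ f.2.injective, Finset.card_univ, Fintype.card_fin]⟩
      invFun := fun s => ⟨s.1.orderEmbOfFin s.2, (s.1.orderEmbOfFin s.2).strictMono⟩
      left_inv := by
        rintro ⟨f, hf⟩
        ext1
        exact (Finset.orderEmbOfFin_unique _ (fun x => Finset.mem_image_of_mem _ (mem_univ x))
          hf).symm
      right_inv := by
        rintro ⟨s, hs⟩
        ext1
        simp only
        rw [← Finset.coe_inj, Finset.coe_image, Finset.coe_univ, Set.image_univ,
          Finset.range_orderEmbOfFin] }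
  rw [Nat.card_congr e, Nat.card_eq_fintype_card, Fintype.card_finset_len, Fintype.card_fin]

def tval (N : ℕ) (τ : Equiv.Perm (Fin N)) (i : ℕ) : ℕ :=
  if h : i < N then (τ ⟨i, h⟩ : ℕ) else N

def dcnt (N : ℕ) (τ : Equiv.Perm (Fin N)) (k : ℕ) : ℕ :=
  ((Finset.range k).filter fun i => tval N τ (i+1) < tval N τ i).card

def ndes (N : ℕ) (τ : Equiv.Perm (Fin N)) : ℕ := dcnt N τ N

def eext {N R : ℕ} (e : Fin N → Fin R) (i : ℕ) : ℕ :=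
  if h : i < N then (e ⟨i, h⟩ : ℕ) else 0

variable {N : ℕ} {τ : Equiv.Perm (Fin N)}

section copyfromt2
lemma tval_lt {i : ℕ} (h : i < N) : tval N τ i < N := by
  rw [tval, dif_pos h]; exact (τ ⟨i, h⟩).isLt
lemma tval_of_lt {i : ℕ} (h : i < N) : tval N τ i = (τ ⟨i, h⟩ : ℕ) := dif_pos h
lemma tval_inj {i j : ℕ} (hi : i < N) (hj : j < N) (h : tval N τ i = tval N τ j) : i = j := by
  rw [tval_of_lt hi, tval_of_lt hj] at h
  have := τ.injective (Fin.val_injective h)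
  simpa [Fin.ext_iff] using this
lemma dcnt_succ (k : ℕ) :
    dcnt N τ (k+1) = dcnt N τ k + if tval N τ (k+1) < tval N τ k then 1 else 0 := by
  rw [dcnt, dcnt, Finset.range_add_one, Finset.filter_insert]
  split <;> simp [Finset.card_insert_of_notMem]
lemma dcnt_le_self (k : ℕ) : dcnt N τ k ≤ k :=
  (Finset.card_filter_le _ _).trans (by simp)
lemma dcnt_mono {k l : ℕ} (h : k ≤ l) : dcnt N τ k ≤ dcnt N τ l :=
  Finset.card_le_card (Finset.filter_subset_filter _ (Finset.range_subset_range.2 h))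
lemma ndes_eq_dcnt_pred (hN : 0 < N) : ndes N τ = dcnt N τ (N - 1) := by
  obtain ⟨k, rfl⟩ : ∃ k, N = k + 1 := ⟨N - 1, by omega⟩
  rw [ndes, dcnt_succ, if_neg, add_zero]
  · simp
  · have h1 : tval (k+1) τ k < k + 1 := tval_lt (by omega)
    have h2 : tval (k+1) τ (k+1) = k + 1 := by rw [tval, dif_neg (by omega)]
    omega
lemma ndes_le (hN : 0 < N) : ndes N τ ≤ N - 1 :=
  (ndes_eq_dcnt_pred hN).le.trans (dcnt_le_self _)
lemma grow (g : ℕ → ℕ) (h : ∀ p, p + 1 < N → g p < g (p+1)) :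
    ∀ i j, i ≤ j → j < N → g i + (j - i) ≤ g j := by
  intro i j hij hj
  induction j with
  | zero => obtain rfl : i = 0 := by omega
            omega
  | succ j ih =>
    rcases Nat.eq_or_lt_of_le hij with rfl | hlt
    · omega
    · have h1 := ih (by omega) (by omega)
      have h2 := h j hj
      omega
lemma growW (g : ℕ → ℕ) (h : ∀ p, p + 1 < N → g p ≤ g (p+1)) :
    ∀ i j, i ≤ j → j < N → g i ≤ g j := by
  intro i j hij hj
  induction j with
  | zero => obtain rfl : i = 0 := by omega
            omega
  | succ j ih =>
    rcases Nat.eq_or_lt_of_le hij with rfl | hlt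
    · omega
    · have h1 := ih (by omega) (by omega)
      have h2 := h j hj
      omega
end copyfromt2

section abstractc
variable {M : ℕ} {c : ℕ → ℕ}
  (Hmono : ∀ p, p + 1 < N → c p ≤ c (p+1))
  (Hdesc : ∀ p, p + 1 < N → tval N τ (p+1) < tval N τ p → c p < c (p+1))
  (Hbd : ∀ p, p < N → c p ≤ M)

include Hmono Hdesc in
lemma key_ineq : ∀ i j, i ≤ j → j < N → c i + dcnt N τ j ≤ c j + dcnt N τ i := by
  intro i j hij hj
  induction j with
  | zero => obtain rfl : i = 0 := by omega
            omega
  | succ j ih =>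
    rcases Nat.eq_or_lt_of_le hij with rfl | hlt
    · omega
    · have h1 := ih (by omega) (by omega)
      have h2 := dcnt_succ (τ := τ) j
      have h3 := Hmono j hj
      split at h2
      · have := Hdesc j hj (by assumption)
        omega
      · omega

include Hmono Hdesc in
lemma e_strict : ∀ p, p + 1 < N → c p + p - dcnt N τ p < c (p+1) + (p+1) - dcnt N τ (p+1) := by
  intro p hp
  have h2 := dcnt_succ (τ := τ) p
  have h4 := dcnt_le_self (τ := τ) p
  split at h2
  · have := Hdesc p hp (by assumption)
    omega
  · have := Hmono p hp
    omega

include Hmono Hdesc Hbd in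
lemma e_bound : ∀ p, p < N → c p + p - dcnt N τ p < (M + N) - ndes N τ := by
  intro p hp
  have h1 := key_ineq Hmono Hdesc p (N-1) (by omega) (by omega)
  have h2 := Hbd (N-1) (by omega)
  have h3 := ndes_eq_dcnt_pred (τ := τ) (by omega : 0 < N)
  have h4 := dcnt_le_self (τ := τ) p
  have h5 := dcnt_mono (τ := τ) (show p ≤ N - 1 by omega)
  omega

end abstractc

section abstracte
variable {M : ℕ} {g : ℕ → ℕ}
  (Ge1 : ∀ p, p + 1 < N → g p < g (p+1))
  (Ge2 : ∀ p, p < N → g p < (M + N) - ndes N τ)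

include Ge1 in
lemma g_ge : ∀ p, p < N → p ≤ g p := by
  intro p hp
  have := grow g Ge1 0 p (by omega) hp
  omega

include Ge1 in
lemma cp_mono : ∀ p, p + 1 < N → g p + dcnt N τ p - p ≤ g (p+1) + dcnt N τ (p+1) - (p+1) := by
  intro p hp
  have h1 := Ge1 p hp
  have h2 := dcnt_succ (τ := τ) p
  have h3 := g_ge Ge1 p (by omega)
  have h4 := dcnt_le_self (τ := τ) p
  split at h2 <;> omega

include Ge1 in
lemma cp_desc : ∀ p, p + 1 < N → tval N τ (p+1) < tval N τ p →
    g p + dcnt N τ p - p < g (p+1) + dcnt N τ (p+1) - (p+1) := by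
  intro p hp hd
  have h1 := Ge1 p hp
  have h2 := dcnt_succ (τ := τ) p
  rw [if_pos hd] at h2
  have h3 := g_ge Ge1 p (by omega)
  have h4 := dcnt_le_self (τ := τ) p
  omega

include Ge1 Ge2 in
lemma cp_bd : ∀ p, p < N → g p + dcnt N τ p - p ≤ M := by
  intro p hp
  have h1 := grow g Ge1 p (N-1) (by omega) (by omega)
  have h2 := Ge2 (N-1) (by omega)
  have h3 := ndes_eq_dcnt_pred (τ := τ) (by omega : 0 < N)
  have h4 := dcnt_le_self (τ := τ) p
  have h5 := dcnt_mono (τ := τ) (show p ≤ N - 1 by omega)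
  have h6 := ndes_le (τ := τ) (by omega : 0 < N)
  omega

end abstracte

/-- chain: no descents between i and j implies increasing values -/
lemma chainlem : ∀ i j, i < j → j < N →
    (∀ p, i ≤ p → p + 1 ≤ j → ¬ tval N τ (p+1) < tval N τ p) → tval N τ i < tval N τ j := by
  intro i j hij hj hnd
  induction j with
  | zero => omega
  | succ j ih =>
    have hstep : tval N τ j < tval N τ (j+1) := by
      have h1 := hnd j (by omega) (by omega)
      have h2 : tval N τ j ≠ tval N τ (j+1) := fun h => by
        have := tval_inj (by omega) hj h
        omega
      omega
    rcases Nat.eq_or_lt_of_le (Nat.lt_succ_iff.mp hij) with rfl | hlt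
    · exact hstep
    · exact (ih hlt (by omega) (fun p hp hp2 => hnd p hp (by omega))).trans hstep

section sortfacts
variable {M : ℕ} {f : Fin N → Fin (M+1)}

lemma eext_lt {R : ℕ} (e : Fin N → Fin R) {i : ℕ} (h : i < N) :
    eext e i = (e ⟨i, h⟩ : ℕ) := dif_pos h

lemma sorted_mono (hf : Tuple.sort f = τ) :
    ∀ p, p + 1 < N → eext (fun i => f (τ i)) p ≤ eext (fun i => f (τ i)) (p+1) := by
  intro p hp
  have hmono := (Tuple.eq_sort_iff.mp hf.symm).1
  rw [eext_lt _ (by omega), eext_lt _ hp]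
  exact hmono (show (⟨p, by omega⟩ : Fin N) ≤ ⟨p+1, hp⟩ from by simp [Fin.le_def])

lemma sorted_desc (hf : Tuple.sort f = τ) :
    ∀ p, p + 1 < N → tval N τ (p+1) < tval N τ p →
      eext (fun i => f (τ i)) p < eext (fun i => f (τ i)) (p+1) := by
  intro p hp hd
  have hties := (Tuple.eq_sort_iff.mp hf.symm).2
  have hle := sorted_mono hf p hp
  rcases Nat.eq_or_lt_of_le hle with heq | h
  · exfalso
    rw [eext_lt _ (by omega : p < N), eext_lt _ hp] at heq
    have hfe : f (τ ⟨p, by omega⟩) = f (τ ⟨p+1, hp⟩) := Fin.val_injective heq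
    have h2 := hties ⟨p, by omega⟩ ⟨p+1, hp⟩ (Fin.mk_lt_mk.mpr (by omega)) hfe
    rw [Fin.lt_def] at h2
    have e1 : tval N τ p = (τ ⟨p, by omega⟩ : ℕ) := tval_of_lt (by omega)
    have e2 : tval N τ (p+1) = (τ ⟨p+1, hp⟩ : ℕ) := tval_of_lt hp
    omega
  · exact h

lemma sorted_bd : ∀ p, p < N → eext (fun i => f (τ i)) p ≤ M := by
  intro p hp
  rw [eext_lt _ hp]
  exact Nat.lt_succ_iff.mp (f (τ ⟨p, hp⟩)).isLt

lemma sort_of {f : Fin N → Fin (M+1)}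
    (hm : ∀ p, p + 1 < N → eext (fun i => f (τ i)) p ≤ eext (fun i => f (τ i)) (p+1))
    (hd : ∀ p, p + 1 < N → tval N τ (p+1) < tval N τ p →
      eext (fun i => f (τ i)) p < eext (fun i => f (τ i)) (p+1)) :
    Tuple.sort f = τ := by
  symm
  rw [Tuple.eq_sort_iff]
  constructor
  · intro i j hij
    have h1 : eext (fun i => f (τ i)) i.val ≤ eext (fun i => f (τ i)) j.val :=
      growW _ hm i.val j.val hij j.isLt
    rw [eext_lt _ i.isLt, eext_lt _ j.isLt, Fin.eta, Fin.eta] at h1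
    simp only [Function.comp_apply]
    rwa [Fin.le_def]
  · intro i j hij heq
    have hceq : eext (fun i => f (τ i)) i.val = eext (fun i => f (τ i)) j.val := by
      rw [eext_lt _ i.isLt, eext_lt _ j.isLt, Fin.eta, Fin.eta, heq]
    have hnd : ∀ p, i.val ≤ p → p + 1 ≤ j.val → ¬ tval N τ (p+1) < tval N τ p := by
      intro p hp1 hp2 hdp
      have hpN : p + 1 < N := by have := j.isLt; omega
      have h1 : eext (fun i => f (τ i)) i.val ≤ eext (fun i => f (τ i)) p :=
        growW _ hm i.val p hp1 (by omega)
      have h2 := hd p hpN hdp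
      have h3 : eext (fun i => f (τ i)) (p+1) ≤ eext (fun i => f (τ i)) j.val :=
        growW _ hm (p+1) j.val hp2 j.isLt
      omega
    have := chainlem i.val j.val hij j.isLt hnd
    rw [tval_of_lt i.isLt, tval_of_lt j.isLt, Fin.eta, Fin.eta] at this
    rwa [Fin.lt_def]
end sortfacts

section equivpart
variable {M : ℕ}

lemma strict_ext {R : ℕ} {e : Fin N → Fin R} (he : StrictMono e) :
    ∀ p, p + 1 < N → eext e p < eext e (p+1) := by
  intro p hp
  rw [eext_lt _ (by omega : p < N), eext_lt _ hp]
  exact he (show (⟨p, by omega⟩ : Fin N) < ⟨p+1, hp⟩ from by simp [Fin.lt_def])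

lemma ext_bd {R : ℕ} (e : Fin N → Fin R) : ∀ p, p < N → eext e p < R := by
  intro p hp
  rw [eext_lt _ hp]
  exact (e ⟨p, hp⟩).isLt

def fwdFun (N M : ℕ) (τ : Equiv.Perm (Fin N)) (f : Fin N → Fin (M+1))
    (hf : Tuple.sort f = τ) : Fin N → Fin ((M + N) - ndes N τ) :=
  fun i => ⟨eext (fun p => f (τ p)) i.val + i.val - dcnt N τ i.val,
    e_bound (sorted_mono hf) (sorted_desc hf) sorted_bd i.val i.isLt⟩

lemma fwdFun_strictMono {τ : Equiv.Perm (Fin N)} {f : Fin N → Fin (M+1)}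
    (hf : Tuple.sort f = τ) : StrictMono (fwdFun N M τ f hf) := by
  intro i j hij
  have hs := e_strict (sorted_mono hf) (sorted_desc hf)
  have h1 : eext (fun p => f (τ p)) i.val + i.val - dcnt N τ i.val + (j.val - i.val) ≤
      eext (fun p => f (τ p)) j.val + j.val - dcnt N τ j.val :=
    grow (fun p => eext (fun q => f (τ q)) p + p - dcnt N τ p) hs i.val j.val (le_of_lt hij) j.isLt
  have hlt : i.val < j.val := hij
  simp only [Fin.lt_def, fwdFun]
  omega

def bwdFun (N M : ℕ) (τ : Equiv.Perm (Fin N)) (e : Fin N → Fin ((M + N) - ndes N τ))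
    (he : StrictMono e) : Fin N → Fin (M+1) :=
  fun v => ⟨eext e (τ.symm v).val + dcnt N τ (τ.symm v).val - (τ.symm v).val,
    Nat.lt_succ_iff.mpr (cp_bd (strict_ext he) (ext_bd e) (τ.symm v).val (τ.symm v).isLt)⟩

lemma bwd_c {τ : Equiv.Perm (Fin N)} {e : Fin N → Fin ((M + N) - ndes N τ)}
    (he : StrictMono e) {p : ℕ} (hp : p < N) :
    eext (fun i => bwdFun N M τ e he (τ i)) p = eext e p + dcnt N τ p - p := by
  rw [eext_lt _ hp]
  show (bwdFun N M τ e he (τ ⟨p, hp⟩)).val = _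
  rw [bwdFun]
  simp only [Equiv.symm_apply_apply]

lemma bwdFun_sort {τ : Equiv.Perm (Fin N)} {e : Fin N → Fin ((M + N) - ndes N τ)}
    (he : StrictMono e) : Tuple.sort (bwdFun N M τ e he) = τ := by
  apply sort_of
  · intro p hp
    rw [bwd_c he (by omega : p < N), bwd_c he hp]
    exact cp_mono (strict_ext he) p hp
  · intro p hp hd
    rw [bwd_c he (by omega : p < N), bwd_c he hp]
    exact cp_desc (strict_ext he) p hp hd

noncomputable def fiberEquiv (N M : ℕ) (τ : Equiv.Perm (Fin N)) :
    {f : Fin N → Fin (M+1) // Tuple.sort f = τ} ≃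
      {e : Fin N → Fin ((M + N) - ndes N τ) // StrictMono e} where
  toFun f := ⟨fwdFun N M τ f.1 f.2, fwdFun_strictMono f.2⟩
  invFun e := ⟨bwdFun N M τ e.1 e.2, bwdFun_sort e.2⟩
  left_inv := by
    rintro ⟨f, hf⟩
    ext v
    have hv : (τ.symm v).val < N := (τ.symm v).isLt
    show (bwdFun N M τ (fwdFun N M τ f hf) (fwdFun_strictMono hf) v).val = (f v).val
    rw [bwdFun]
    simp only
    have h1 : eext (fwdFun N M τ f hf) (τ.symm v).val =
        eext (fun p => f (τ p)) (τ.symm v).val + (τ.symm v).val - dcnt N τ (τ.symm v).val := by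
      rw [eext_lt _ hv]; rfl
    have h2 : eext (fun p => f (τ p)) (τ.symm v).val = (f v).val := by
      rw [eext_lt _ hv]
      simp [Fin.eta]
    have h3 := dcnt_le_self (τ := τ) (τ.symm v).val
    have h4 : dcnt N τ (τ.symm v).val ≤ (τ.symm v).val := h3
    omega
  right_inv := by
    rintro ⟨e, he⟩
    ext i
    show (fwdFun N M τ (bwdFun N M τ e he) (bwdFun_sort he) i).val = (e i).val
    rw [fwdFun]
    simp only
    have h1 : eext (fun p => bwdFun N M τ e he (τ p)) i.val = eext e i.val + dcnt N τ i.val - i.val :=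
      bwd_c he i.isLt
    have h2 : eext e i.val = (e i).val := by rw [eext_lt _ i.isLt, Fin.eta]
    have h3 : i.val ≤ eext e i.val := g_ge (strict_ext he) i.val i.isLt
    have h4 := dcnt_le_self (τ := τ) i.val
    omega

lemma fiber_card (N M : ℕ) (τ : Equiv.Perm (Fin N)) :
    Nat.card {f : Fin N → Fin (M+1) // Tuple.sort f = τ} = ((M + N) - ndes N τ).choose N := by
  rw [Nat.card_congr (fiberEquiv N M τ), card_strictMonoFun]
end equivpart

lemma worpitzky_s15 (N M : ℕ) :
    ∑ τ : Equiv.Perm (Fin N), ((M + N) - ndes N τ).choose N = (M + 1) ^ N := by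
  classical
  have h1 : Fintype.card (Fin N → Fin (M+1)) = (M+1)^N := by
    rw [Fintype.card_fun, Fintype.card_fin, Fintype.card_fin]
  rw [← h1]
  rw [Fintype.card_congr (Equiv.sigmaFiberEquiv (fun f : Fin N → Fin (M+1) => Tuple.sort f)).symm]
  rw [Fintype.card_sigma]
  congr 1
  funext τ
  rw [← fiber_card N M τ, Nat.card_eq_fintype_card]

section rotation
variable {N : ℕ}

lemma cyclicSucc_eq_add_one (i : Fin (N+1)) : cyclicSucc i = i + 1 := by
  apply Fin.ext
  simp only [cyclicSucc, Fin.add_def, Fin.val_one']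
  rw [Nat.add_mod i.val 1, Nat.mod_eq_of_lt i.isLt]

def gfun (N : ℕ) (τ : Equiv.Perm (Fin N)) : Fin (N+1) → Fin (N+1) :=
  Fin.cons (Fin.last N) (fun i => (τ i).castSucc)

lemma gfun_injective (τ : Equiv.Perm (Fin N)) : Function.Injective (gfun N τ) := by
  intro a b hab
  induction a using Fin.cases with
  | zero =>
    induction b using Fin.cases with
    | zero => rfl
    | succ j =>
      rw [gfun, Fin.cons_zero, Fin.cons_succ] at hab
      exact absurd hab.symm (Fin.castSucc_lt_last _).ne
  | succ i =>
    induction b using Fin.cases with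
    | zero =>
      rw [gfun, Fin.cons_zero, Fin.cons_succ] at hab
      exact absurd hab (Fin.castSucc_lt_last _).ne
    | succ j =>
      rw [gfun, Fin.cons_succ, Fin.cons_succ] at hab
      rw [τ.injective (Fin.castSucc_injective _ hab)]

noncomputable def sig0 (N : ℕ) (τ : Equiv.Perm (Fin N)) : Equiv.Perm (Fin (N+1)) :=
  Equiv.ofBijective (gfun N τ) (Finite.injective_iff_bijective.mp (gfun_injective τ))

lemma sig0_apply (τ : Equiv.Perm (Fin N)) (i : Fin (N+1)) : sig0 N τ i = gfun N τ i := rfl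

noncomputable def Phi (N : ℕ) (kt : Fin (N+1) × Equiv.Perm (Fin N)) : Equiv.Perm (Fin (N+1)) :=
  (Equiv.subRight kt.1).trans (sig0 N kt.2)

lemma Phi_apply (k : Fin (N+1)) (τ : Equiv.Perm (Fin N)) (i : Fin (N+1)) :
    Phi N (k, τ) i = gfun N τ (i - k) := rfl

lemma Phi_injective : Function.Injective (Phi N) := by
  rintro ⟨k, τ⟩ ⟨k', τ'⟩ h
  have hk : ∀ (k₀ : Fin (N+1)) (τ₀ : Equiv.Perm (Fin N)), Phi N (k₀, τ₀) k₀ = Fin.last N := by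
    intro k₀ τ₀
    rw [Phi_apply, sub_self]
    exact Fin.cons_zero _ _
  have hkk' : k = k' := by
    have h1 : Phi N (k', τ') k = Fin.last N := by rw [← h]; exact hk k τ
    have h2 : Phi N (k', τ') k' = Fin.last N := hk k' τ'
    exact (Phi N (k', τ')).injective (h1.trans h2.symm)
  subst hkk'
  have hτ : τ = τ' := by
    apply Equiv.ext
    intro i
    have h1 : Phi N (k, τ) (i.succ + k) = Phi N (k, τ') (i.succ + k) := by rw [h]
    rw [Phi_apply, Phi_apply, add_sub_cancel_right] at h1
    simp only [gfun, Fin.cons_succ] at h1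
    exact Fin.castSucc_injective _ h1
  rw [hτ]

lemma Phi_bijective : Function.Bijective (Phi N) := by
  rw [Fintype.bijective_iff_injective_and_card]
  refine ⟨Phi_injective, ?_⟩
  rw [Fintype.card_prod, Fintype.card_perm, Fintype.card_perm, Fintype.card_fin,
    Fintype.card_fin, Nat.factorial_succ]
end rotation

section cdescomp
variable {N : ℕ} (τ : Equiv.Perm (Fin N))

lemma gfun_val (j : Fin (N+1)) :
    (gfun N τ j).val = if 0 < j.val then tval N τ (j.val - 1) else N := by
  induction j using Fin.cases with
  | zero => simp [gfun, Fin.cons_zero]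
  | succ i =>
    simp only [gfun, Fin.cons_succ, Fin.val_succ, Nat.add_sub_cancel, if_pos (Nat.succ_pos _)]
    rw [Fin.coe_castSucc, tval_of_lt i.isLt, Fin.eta]

lemma hQ0 (hN : 0 < N) : gfun N τ (0 + 1) < gfun N τ 0 := by
  rw [Fin.lt_def, zero_add, gfun_val, gfun_val]
  have h1 : ((1 : Fin (N+1))).val = 1 := by
    rw [Fin.val_one']
    exact Nat.mod_eq_of_lt (by omega)
  rw [h1]
  simp only [Fin.val_zero, if_pos (by omega : 0 < 1), if_neg (lt_irrefl 0)]
  exact tval_lt (by omega)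

lemma hQsucc (i : Fin N) :
    gfun N τ (i.succ + 1) < gfun N τ i.succ ↔ tval N τ (i.val + 1) < tval N τ i.val := by
  have hsv : (i.succ : Fin (N+1)).val = i.val + 1 := Fin.val_succ i
  have hgs : (gfun N τ i.succ).val = tval N τ i.val := by
    rw [gfun_val, hsv, if_pos (Nat.succ_pos _), Nat.add_sub_cancel]
  rcases Nat.lt_or_ge (i.val + 1) N with h | h
  · have hv : ((i.succ + 1 : Fin (N+1))).val = i.val + 2 := by
      rw [Fin.add_def, hsv, Fin.val_one']
      rw [Nat.mod_eq_of_lt (by omega : 1 < N + 1)]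
      exact Nat.mod_eq_of_lt (by omega)
    have hg1 : (gfun N τ (i.succ + 1)).val = tval N τ (i.val + 1) := by
      rw [gfun_val, hv, if_pos (by omega)]
      congr 1
    rw [Fin.lt_def, hg1, hgs]
  · have hN : i.val + 1 = N := by have := i.isLt; omega
    have hv : ((i.succ + 1 : Fin (N+1))).val = 0 := by
      rw [Fin.add_def, hsv, Fin.val_one']
      rw [Nat.mod_eq_of_lt (by omega : 1 < N + 1), hN]
      exact Nat.mod_self _
    have hg1 : (gfun N τ (i.succ + 1)).val = N := by
      rw [gfun_val, hv, if_neg (lt_irrefl 0)]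
    have h2 : tval N τ (i.val + 1) = N := by rw [tval, dif_neg (by omega)]
    have h3 : tval N τ i.val < N := tval_lt i.isLt
    rw [Fin.lt_def, hg1, hgs]
    omega

lemma card_Q (hN : 0 < N) :
    Nat.card {j : Fin (N+1) // gfun N τ (j + 1) < gfun N τ j} = 1 + ndes N τ := by
  have e : {j : Fin (N+1) // gfun N τ (j + 1) < gfun N τ j} ≃
      Option {i : Fin N // tval N τ (i.val + 1) < tval N τ i.val} :=
    { toFun := fun x => if h : x.1 = 0 then none else
        some ⟨⟨x.1.val - 1, by have := x.1.isLt; have : x.1.val ≠ 0 := fun hc => h (Fin.ext hc); omega⟩, by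
          have hpos : 0 < x.1.val := by
            have : x.1.val ≠ 0 := fun hc => h (Fin.ext hc)
            omega
          have hj : x.1 = Fin.succ ⟨x.1.val - 1, by have := x.1.isLt; omega⟩ := by
            apply Fin.ext; simp; omega
          have := x.2
          rw [hj] at this
          exact (hQsucc τ _).mp this⟩
      invFun := fun o => o.elim ⟨0, hQ0 τ hN⟩ (fun x => ⟨Fin.succ x.1, (hQsucc τ x.1).mpr x.2⟩)
      left_inv := by
        rintro ⟨j, hj⟩
        by_cases h : j = 0
        · simp only [dif_pos h]
          exact Subtype.ext h.symm
        · simp only [dif_neg h]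
          apply Subtype.ext
          apply Fin.ext
          have hne : j.val ≠ 0 := fun hc => h (Fin.ext hc)
          show j.val - 1 + 1 = j.val
          omega
      right_inv := by
        rintro (_ | ⟨x, hx⟩)
        · simp
        · have : (Fin.succ x : Fin (N+1)) ≠ 0 := Fin.succ_ne_zero x
          simp only [Option.elim, dif_neg this]
          congr 1 }
  rw [Nat.card_congr e, Finite.card_option, add_comm]
  congr 1
  rw [Nat.card_eq_fintype_card, Fintype.card_subtype, ndes, dcnt]
  refine Finset.card_bij' (fun (i : Fin N) _ => i.val)
    (fun a ha => (⟨a, by simp only [Finset.mem_filter, Finset.mem_range] at ha; exact ha.1⟩ : Fin N))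
    ?_ ?_ ?_ ?_
  · intro i hi
    simp only [Finset.mem_filter, Finset.mem_univ, true_and] at hi
    simp only [Finset.mem_filter, Finset.mem_range]
    exact ⟨i.isLt, hi⟩
  · intro a ha
    simp only [Finset.mem_filter, Finset.mem_range] at ha
    simp only [Finset.mem_filter, Finset.mem_univ, true_and]
    exact ha.2
  · intro i hi; rfl
  · intro a ha; rfl

lemma cdes_Phi (hN : 0 < N) (k : Fin (N+1)) (τ : Equiv.Perm (Fin N)) :
    cdes (N+1) (Phi N (k, τ)) = 1 + ndes N τ := by
  rw [cdes, ← card_Q τ hN]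
  apply Nat.card_congr
  apply Equiv.subtypeEquiv (Equiv.subRight k)
  intro i
  have h1 : ∀ j : Fin (N+1), Phi N (k, τ) j = gfun N τ (j - k) := fun j => rfl
  rw [cyclicSucc_eq_add_one, h1, h1]
  have h2 : i + 1 - k = (i - k) + 1 := by
    rw [sub_add_eq_add_sub]
  rw [h2]
  rfl
end cdescomp


-- ===== master counting lemma =====

lemma cdes_one (σ : Equiv.Perm (Fin 1)) : cdes 1 σ = 0 := by
  rw [cdes]
  have : IsEmpty {i : Fin 1 // σ (cyclicSucc i) < σ i} := by
    constructor
    rintro ⟨i, hi⟩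
    have h1 : cyclicSucc i = i := Subsingleton.elim _ _
    rw [h1] at hi
    exact lt_irrefl _ hi
  exact Nat.card_of_isEmpty

lemma master (n : ℕ) (hn : 0 < n) (m : ℕ) :
    (∑ σ : Equiv.Perm (Fin n),
      if cdes n σ ≤ m then (m - cdes n σ + (n - 1)).choose (n - 1) else 0) = n * m ^ (n - 1) := by
  obtain ⟨N, rfl⟩ : ∃ N, n = N + 1 := ⟨n - 1, by omega⟩
  simp only [Nat.add_sub_cancel]
  rcases Nat.eq_zero_or_pos N with rfl | hN
  · have h1 : ∀ σ : Equiv.Perm (Fin (0+1)), cdes (0+1) σ = 0 := cdes_one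
    simp only [h1, Nat.zero_le, if_pos, Nat.sub_zero, Nat.add_zero, Nat.choose_zero_right]
    rw [Finset.sum_const, Finset.card_univ, Fintype.card_perm, Fintype.card_fin]
    simp
  · have hsum := Fintype.sum_bijective (Phi N) Phi_bijective
      (fun kt => if cdes (N+1) (Phi N kt) ≤ m then (m - cdes (N+1) (Phi N kt) + N).choose N else 0)
      (fun σ => if cdes (N+1) σ ≤ m then (m - cdes (N+1) σ + N).choose N else 0)
      (fun kt => rfl)
    rw [← hsum, Fintype.sum_prod_type]
    have hterm : ∀ (k : Fin (N+1)) (τ : Equiv.Perm (Fin N)),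
        (if cdes (N+1) (Phi N (k, τ)) ≤ m then (m - cdes (N+1) (Phi N (k, τ)) + N).choose N else 0)
          = (if 1 + ndes N τ ≤ m then (m - (1 + ndes N τ) + N).choose N else 0) := by
      intro k τ
      rw [cdes_Phi hN k τ]
    simp only [hterm]
    rcases Nat.eq_zero_or_pos m with rfl | hm
    · simp only [show ∀ τ : Equiv.Perm (Fin N), ¬ (1 + ndes N τ ≤ 0) from fun τ => by omega,
        if_false, Finset.sum_const_zero, Nat.zero_eq]
      rw [zero_pow (by omega : N ≠ 0), mul_zero]
    · obtain ⟨M, rfl⟩ : ∃ M, m = M + 1 := ⟨m - 1, by omega⟩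
      have hterm2 : ∀ τ : Equiv.Perm (Fin N),
          (if 1 + ndes N τ ≤ M + 1 then (M + 1 - (1 + ndes N τ) + N).choose N else 0)
            = ((M + N) - ndes N τ).choose N := by
        intro τ
        by_cases h : ndes N τ ≤ M
        · rw [if_pos (by omega)]
          congr 1
          omega
        · rw [if_neg (by omega), Nat.choose_eq_zero_of_lt (by omega)]
      simp only [hterm2]
      rw [Finset.sum_congr rfl (fun (k : Fin (N+1)) _ => worpitzky_s15 N M)]
      rw [Finset.sum_const, Finset.card_univ, Fintype.card_fin, smul_eq_mul]

-- ===== outdeg = cdes of inverse =====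

lemma outdeg_tour_cycle (n : ℕ) (σ : Fin n ≃ Fin n) :
    outdeg (Tour n) (DCycle n) σ = cdes n σ.symm := by
  rw [outdeg, cdes]
  have e1 : {a : Fin n // σ.symm (cyclicSucc (σ a)) < a} ≃
      {φ : Fin n ≃ Fin n // dfsAdj (Tour n) (DCycle n) σ φ} := by
    apply Equiv.ofBijective
      (f := fun a => ⟨(Equiv.swap a.1 (σ.symm (cyclicSucc (σ a.1)))).trans σ,
        a.1, σ.symm (cyclicSucc (σ a.1)), a.2, (σ.apply_symm_apply _).symm ▸ rfl, rfl⟩)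
    constructor
    · rintro ⟨a₁, h₁⟩ ⟨a₂, h₂⟩ h
      simp only [Subtype.mk_eq_mk] at h ⊢
      set b₁ := σ.symm (cyclicSucc (σ a₁)) with hb₁
      set b₂ := σ.symm (cyclicSucc (σ a₂)) with hb₂
      have hsw : Equiv.swap a₁ b₁ = Equiv.swap a₂ b₂ := by
        have := congrArg (fun ψ : Fin n ≃ Fin n => ψ.trans σ.symm) (congrArg Subtype.val h)
        simpa [Equiv.trans_assoc] using this
      by_contra hne
      have hne1 : a₁ ≠ b₁ := fun hc => by rw [← hc] at h₁; exact lt_irrefl _ h₁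
      have hne2 : a₂ ≠ b₂ := fun hc => by rw [← hc] at h₂; exact lt_irrefl _ h₂
      have hv : Equiv.swap a₂ b₂ a₁ = b₁ := by rw [← hsw]; exact Equiv.swap_apply_left _ _
      by_cases hc1 : a₁ = a₂
      · exact hne hc1
      · by_cases hc2 : a₁ = b₂
        · have hv2 : Equiv.swap a₂ b₂ a₂ = b₂ := Equiv.swap_apply_left _ _
          rw [← hsw] at hv2
          have ha₂ : Equiv.swap a₁ b₁ a₂ = b₂ := hv2
          have hb2a1 : Equiv.swap a₂ b₂ a₁ = a₂ := by rw [hc2]; exact Equiv.swap_apply_right _ _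
          have : a₂ = b₁ := by rw [← hv, hb2a1]
          rw [hc2] at h₁
          rw [← this] at h₁
          exact absurd (h₂.trans h₁) (lt_irrefl _)
        · have : Equiv.swap a₂ b₂ a₁ = a₁ := Equiv.swap_apply_of_ne_of_ne hc1 hc2
          rw [hv] at this
          exact hne1 this.symm
    · rintro ⟨φ, a, b, hab, hcy, rfl⟩
      have hb : b = σ.symm (cyclicSucc (σ a)) := by
        have : σ b = cyclicSucc (σ a) := hcy
        rw [← this, Equiv.symm_apply_apply]
      refine ⟨⟨a, ?_⟩, ?_⟩
      · rw [← hb]; exact hab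
      · simp only [Subtype.mk_eq_mk]
        subst hb; rfl
  rw [← Nat.card_congr e1]
  apply Nat.card_congr
  apply Equiv.subtypeEquiv σ
  intro a
  rw [Equiv.symm_apply_apply]

-- ===== power series: inverse of (1-X)^n =====

open PowerSeries in
lemma one_sub_X_mul_choose (K : ℕ) :
    ((1 : ℤ⟦X⟧) - PowerSeries.X) * PowerSeries.mk (fun j => ((j + (K+1)).choose (K+1) : ℤ)) =
      PowerSeries.mk (fun j => ((j + K).choose K : ℤ)) := by
  ext k
  rw [sub_mul, one_mul, map_sub, coeff_mk]
  cases k with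
  | zero =>
    rw [coeff_zero_X_mul, coeff_mk]
    simp
  | succ k =>
    rw [coeff_succ_X_mul, coeff_mk, coeff_mk]
    have h := Nat.choose_succ_succ (k + K + 1) K
    have e1 : k + 1 + (K + 1) = (k + K + 1) + 1 := by omega
    have e2 : k + (K + 1) = k + K + 1 := by omega
    have e3 : k + 1 + K = k + K + 1 := by omega
    rw [e1, e2, e3, h]
    push_cast
    ring

open PowerSeries in
lemma one_sub_X_pow_inv (K : ℕ) :
    ((1 : ℤ⟦X⟧) - PowerSeries.X) ^ (K + 1) *
      PowerSeries.mk (fun j => ((j + K).choose K : ℤ)) = 1 := by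
  induction K with
  | zero =>
    ext k
    rw [pow_one, sub_mul, one_mul, map_sub]
    cases k with
    | zero => simp [coeff_zero_X_mul, coeff_mk]
    | succ k => simp [coeff_succ_X_mul, coeff_mk, coeff_one]
  | succ K ih =>
    calc ((1 : ℤ⟦X⟧) - PowerSeries.X) ^ (K + 2) *
          PowerSeries.mk (fun j => ((j + (K+1)).choose (K+1) : ℤ))
        = ((1 : ℤ⟦X⟧) - PowerSeries.X) ^ (K + 1) *
            (((1 : ℤ⟦X⟧) - PowerSeries.X) * PowerSeries.mk (fun j => ((j + (K+1)).choose (K+1) : ℤ))) := by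
          ring
      _ = 1 := by rw [one_sub_X_mul_choose]; exact ih

-- ===== antidiagonal helper =====

lemma antidiagonal_if_sum (m c : ℕ) (g : ℕ → ℤ) :
    (∑ p ∈ Finset.HasAntidiagonal.antidiagonal m, if p.1 = c then g p.2 else 0) =
      if c ≤ m then g (m - c) else 0 := by
  by_cases h : c ≤ m
  · rw [if_pos h]
    rw [Finset.sum_eq_single_of_mem (c, m - c) (by rw [Finset.HasAntidiagonal.mem_antidiagonal]; omega)]
    · rw [if_pos rfl]
    · rintro ⟨p1, p2⟩ hp hne
      rw [Finset.HasAntidiagonal.mem_antidiagonal] at hp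
      by_cases h1 : p1 = c
      · exfalso; apply hne; subst h1; simp only [Prod.mk.injEq, true_and]; omega
      · rw [if_neg h1]
  · rw [if_neg h]
    apply Finset.sum_eq_zero
    rintro ⟨p1, p2⟩ hp
    rw [Finset.HasAntidiagonal.mem_antidiagonal] at hp
    rw [if_neg (by omega)]

theorem odp_tour_cycle (n : ℕ) (hn : 0 < n) :
    ODP (Tour n) (DCycle n) = (∑ σ : Equiv.Perm (Fin n), Polynomial.X ^ cdes n σ) ∧
      ((ODP (Tour n) (DCycle n) : Polynomial ℤ) : PowerSeries ℤ) =
        (1 - PowerSeries.X) ^ n *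
          ((n : PowerSeries ℤ) * PowerSeries.mk (fun m => (m : ℤ) ^ (n - 1))) := by
  have hODP : ODP (Tour n) (DCycle n) = ∑ σ : Equiv.Perm (Fin n), Polynomial.X ^ cdes n σ := by
    rw [ODP]
    rw [Fintype.sum_congr _ _ (fun σ : Fin n ≃ Fin n =>
      by rw [outdeg_tour_cycle] :
        ∀ σ : Fin n ≃ Fin n, (Polynomial.X : Polynomial ℤ) ^ outdeg (Tour n) (DCycle n) σ =
          Polynomial.X ^ cdes n σ.symm)]
    exact Fintype.sum_equiv (Equiv.inv (Equiv.Perm (Fin n))) _ _ (fun σ => rfl)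
  refine ⟨hODP, ?_⟩
  rw [hODP]
  set C : Polynomial ℤ := ∑ σ : Equiv.Perm (Fin n), Polynomial.X ^ cdes n σ with hC
  set B : PowerSeries ℤ := PowerSeries.mk (fun j => ((j + (n-1)).choose (n-1) : ℤ)) with hBdef
  have hB : ((1 : PowerSeries ℤ) - PowerSeries.X) ^ n * B = 1 := by
    obtain ⟨N, rfl⟩ : ∃ N, n = N + 1 := ⟨n - 1, by omega⟩
    simpa [hBdef] using one_sub_X_pow_inv N
  have hcoeff : ∀ k, (PowerSeries.coeff k) (C : PowerSeries ℤ) =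
      ∑ σ : Equiv.Perm (Fin n), if k = cdes n σ then 1 else 0 := by
    intro k
    rw [Polynomial.coeff_coe, hC, Polynomial.finset_sum_coeff]
    simp [Polynomial.coeff_X_pow]
  have hCB : (C : PowerSeries ℤ) * B =
      (n : PowerSeries ℤ) * PowerSeries.mk (fun m => (m : ℤ) ^ (n - 1)) := by
    ext m
    rw [PowerSeries.coeff_mul]
    have step1 : ∀ p ∈ Finset.HasAntidiagonal.antidiagonal m,
        (PowerSeries.coeff p.1) (C : PowerSeries ℤ) * (PowerSeries.coeff p.2) B =
          ∑ σ : Equiv.Perm (Fin n),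
            (if p.1 = cdes n σ then ((p.2 + (n-1)).choose (n-1) : ℤ) else 0) := by
      intro p _
      rw [hcoeff, hBdef, PowerSeries.coeff_mk, Finset.sum_mul]
      apply Finset.sum_congr rfl
      intro σ _
      rw [ite_mul, one_mul, zero_mul]
    rw [Finset.sum_congr rfl step1, Finset.sum_comm]
    have step2 : ∀ σ : Equiv.Perm (Fin n),
        (∑ p ∈ Finset.HasAntidiagonal.antidiagonal m,
          if p.1 = cdes n σ then ((p.2 + (n-1)).choose (n-1) : ℤ) else 0) =
          (if cdes n σ ≤ m then ((m - cdes n σ + (n-1)).choose (n-1) : ℕ) else (0 : ℕ) : ℤ) := by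
      intro σ
      rw [antidiagonal_if_sum m (cdes n σ) (fun j => ((j + (n-1)).choose (n-1) : ℤ))]
      by_cases h : cdes n σ ≤ m
      · rw [if_pos h, if_pos h]
      · rw [if_neg h, if_neg h, Nat.cast_zero]
    rw [Finset.sum_congr rfl (fun σ _ => step2 σ)]
    have step3 : (∑ σ : Equiv.Perm (Fin n), if cdes n σ ≤ m then
        (((m - cdes n σ + (n - 1)).choose (n - 1) : ℕ) : ℤ) else ((0 : ℕ) : ℤ)) =
        ((∑ σ : Equiv.Perm (Fin n), if cdes n σ ≤ m then
          (m - cdes n σ + (n - 1)).choose (n - 1) else 0 : ℕ) : ℤ) := by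
      rw [Nat.cast_sum]
      exact Finset.sum_congr rfl (fun σ _ => (apply_ite (fun x : ℕ => (x : ℤ)) _ _ _).symm)
    rw [step3, master n hn m]
    have hrhs : (PowerSeries.coeff m)
        ((n : PowerSeries ℤ) * PowerSeries.mk (fun m => (m : ℤ) ^ (n - 1))) =
          (n : ℤ) * (m : ℤ) ^ (n - 1) := by
      rw [show ((n : ℕ) : PowerSeries ℤ) = PowerSeries.C ((n : ℕ) : ℤ) from
        (map_natCast (PowerSeries.C (R := ℤ)) n).symm ▸ rfl]
      rw [PowerSeries.coeff_C_mul, PowerSeries.coeff_mk]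
    rw [hrhs]
    push_cast
    ring
  calc (C : PowerSeries ℤ) = (C : PowerSeries ℤ) * (((1 : PowerSeries ℤ) - PowerSeries.X) ^ n * B) := by
        rw [hB, mul_one]
    _ = ((1 : PowerSeries ℤ) - PowerSeries.X) ^ n * ((C : PowerSeries ℤ) * B) := by ring
    _ = (1 - PowerSeries.X) ^ n *
          ((n : PowerSeries ℤ) * PowerSeries.mk (fun m => (m : ℤ) ^ (n - 1))) := by
        rw [hCB]
end

section
/- For each 1 ≤ i ≤ n−1, Σ x^{outdeg(σ)} over permutations σ with σ(i) = n in DFS(Tour_n, Cycle_n) equals Σ x^{outdeg(σ)} over permutations σ with σ(1) = n; equivalently, the number of permutations σ of [n] with σ(i) = n and exactly k cyclic descents is independent of i. -/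
/- auxiliary lemmas -/

lemma cyclicSucc_eq {n : ℕ} [NeZero n] (x : Fin n) : cyclicSucc x = x + 1 := by
  apply Fin.ext
  simp only [cyclicSucc, Fin.add_def, Fin.val_one']
  conv_lhs => rw [Nat.add_mod]
  conv_rhs => rw [Nat.add_mod, Nat.mod_mod_of_dvd _ (dvd_refl n)]

lemma cdes_filter {n : ℕ} (σ : Equiv.Perm (Fin n)) :
    cdes n σ = (Finset.univ.filter fun i : Fin n => σ (cyclicSucc i) < σ i).card := by
  rw [cdes, Nat.card_eq_fintype_card, Fintype.card_subtype]

lemma cdes_pre {n : ℕ} (σ : Equiv.Perm (Fin n)) (e : Fin n ≃ Fin n)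
    (he : ∀ x, e (cyclicSucc x) = cyclicSucc (e x)) : cdes n (e.trans σ) = cdes n σ := by
  rw [cdes, cdes]
  exact Nat.card_congr (Equiv.subtypeEquiv e (fun j => by
    simp only [Equiv.trans_apply, he]))

lemma outdeg_eq {n : ℕ} (σ : Equiv.Perm (Fin n)) :
    outdeg (Tour n) (DCycle n) σ = cdes n σ.symm := by
  rw [outdeg, cdes]
  apply Nat.card_congr
  refine (Equiv.ofBijective (fun j : {i : Fin n // σ.symm (cyclicSucc i) < σ.symm i} =>
    (⟨(Equiv.swap (σ.symm j.1) (σ.symm (cyclicSucc j.1))).trans σ,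
      σ.symm j.1, σ.symm (cyclicSucc j.1), j.2, by simp [DCycle], rfl⟩ :
      {φ // dfsAdj (Tour n) (DCycle n) σ φ})) ⟨?_, ?_⟩).symm
  · rintro ⟨j1, hj1⟩ ⟨j2, hj2⟩ h
    simp only [Subtype.mk.injEq] at h
    set a1 := σ.symm j1; set b1 := σ.symm (cyclicSucc j1)
    set a2 := σ.symm j2; set b2 := σ.symm (cyclicSucc j2)
    have hs : Equiv.swap a1 b1 = Equiv.swap a2 b2 := by
      have := congrArg (fun e : Fin n ≃ Fin n => e.trans σ.symm) (congrArg Subtype.val h)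
      simpa [Equiv.trans_assoc] using this
    have hval : Equiv.swap a1 b1 a2 = b2 := by rw [hs]; simp
    have ha : a1 = a2 := by
      by_cases h12 : a2 = a1
      · exact h12.symm
      by_cases h12' : a2 = b1
      · rw [h12', Equiv.swap_apply_right] at hval
        exact absurd (hj2.trans (h12' ▸ hj1)) (by rw [hval]; exact lt_irrefl _)
      · rw [Equiv.swap_apply_of_ne_of_ne h12 h12'] at hval
        exact absurd hj2 (by rw [← hval]; exact lt_irrefl _)
    exact Subtype.ext (σ.symm.injective ha)
  · rintro ⟨φ, a, b, hT, hY, rfl⟩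
    have hY' : σ b = cyclicSucc (σ a) := hY
    refine ⟨⟨σ a, ?_⟩, ?_⟩
    · rw [← hY']; simpa [Tour] using hT
    · apply Subtype.ext
      simp only []
      rw [← hY']; simp

lemma fin_sub_val {n : ℕ} (a b : Fin n) :
    ((a - b).val : ℤ) = (a.val : ℤ) - b.val + (if a < b then (n : ℤ) else 0) := by
  have hb := b.isLt
  have ha := a.isLt
  have hsub : (a - b).val = (a.val + (n - b.val)) % n := by
    rw [Fin.sub_def]
    simp [Nat.add_comm]
  rcases le_or_gt b a with h | h
  · have hlt : ¬ a < b := not_lt.mpr h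
    have hle : b.val ≤ a.val := h
    rw [if_neg hlt]
    have h1 : a.val + (n - b.val) = n + (a.val - b.val) := by omega
    rw [hsub, h1, Nat.add_mod_left, Nat.mod_eq_of_lt (by omega)]
    omega
  · rw [if_pos h]
    have hlt2 : a.val + (n - b.val) < n := by
      have : a.val < b.val := h
      omega
    rw [hsub, Nat.mod_eq_of_lt hlt2]
    have : a.val < b.val := h
    push_cast
    omega

lemma cdes_trans {n : ℕ} [NeZero n] (τ : Equiv.Perm (Fin n)) (e : Fin n ≃ Fin n)
    (he : ∀ a b : Fin n, e a - e b = a - b) : cdes n (τ.trans e) = cdes n τ := by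
  by_cases h1 : n = 1
  · subst h1
    have hz : ∀ ψ : Equiv.Perm (Fin 1), cdes 1 ψ = 0 := by
      intro ψ
      rw [cdes_filter]
      simp [Finset.filter_eq_empty_iff, Subsingleton.elim (ψ (cyclicSucc _)) (ψ _)]
    rw [hz, hz]
  have h2 : 1 < n := lt_of_le_of_ne (Nat.one_le_iff_ne_zero.mpr (NeZero.ne n)) (Ne.symm h1)
  have hne : ∀ j : Fin n, j + 1 ≠ j := by
    intro j h
    have h0 : (1 : Fin n) = 0 :=
      add_left_cancel (a := j) (b := 1) (c := 0) (by simpa using h)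
    have hv : (1 : Fin n).val = 0 := by rw [h0]; rfl
    rw [Fin.val_one', Nat.mod_eq_of_lt h2] at hv
    exact one_ne_zero hv
  have key : ∀ ψ : Equiv.Perm (Fin n),
      (n : ℤ) * ((Finset.univ.filter fun j : Fin n => ψ j < ψ (j + 1)).card) =
        ∑ j : Fin n, ((ψ j - ψ (j + 1)).val : ℤ) := by
    intro ψ
    have hstep : ∀ j : Fin n, ((ψ j - ψ (j + 1)).val : ℤ) =
        ((ψ j).val : ℤ) - ((ψ (j + 1)).val : ℤ) + (if ψ j < ψ (j + 1) then (n : ℤ) else 0) :=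
      fun j => fin_sub_val _ _
    rw [Finset.sum_congr rfl (fun j _ => hstep j), Finset.sum_add_distrib,
      Finset.sum_sub_distrib]
    have hshift : ∑ j : Fin n, ((ψ (j + 1)).val : ℤ) = ∑ j : Fin n, ((ψ j).val : ℤ) :=
      Fintype.sum_equiv (Equiv.addRight (1 : Fin n)) _ _ (fun j => rfl)
    rw [hshift, ← Finset.sum_filter, Finset.sum_const, nsmul_eq_mul]
    ring
  have hsum : ∑ j : Fin n, (((τ.trans e) j - (τ.trans e) (j + 1)).val : ℤ) =
      ∑ j : Fin n, ((τ j - τ (j + 1)).val : ℤ) := by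
    apply Finset.sum_congr rfl
    intro j _
    simp only [Equiv.trans_apply, he]
  have hAnat : (Finset.univ.filter fun j : Fin n => (τ.trans e) j < (τ.trans e) (j + 1)).card =
      (Finset.univ.filter fun j : Fin n => τ j < τ (j + 1)).card := by
    have hA := (key (τ.trans e)).trans (hsum.trans (key τ).symm)
    exact_mod_cast mul_left_cancel₀ (by exact_mod_cast (by omega : n ≠ 0)) hA
  have hpart : ∀ ψ : Equiv.Perm (Fin n),
      (Finset.univ.filter fun j : Fin n => ψ (j + 1) < ψ j).card +
        (Finset.univ.filter fun j : Fin n => ψ j < ψ (j + 1)).card = n := by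
    intro ψ
    have hinj : ∀ j : Fin n, ψ (j + 1) ≠ ψ j := fun j h => hne j (ψ.injective h)
    have heq : (Finset.univ.filter fun j : Fin n => ψ j < ψ (j + 1)) =
        (Finset.univ.filter fun j : Fin n => ¬ ψ (j + 1) < ψ j) := by
      apply Finset.filter_congr
      intro j _
      constructor
      · exact fun h => not_lt.mpr (le_of_lt h)
      · exact fun h => lt_of_le_of_ne (not_lt.mp h) (fun hh => hinj j hh.symm)
    rw [heq, Finset.card_filter_add_card_filter_not, Finset.card_univ, Fintype.card_fin]
  have e1 := hpart (τ.trans e)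
  have e2 := hpart τ
  rw [cdes_filter, cdes_filter]
  simp only [cyclicSucc_eq]
  omega

theorem cycle_rotation_invariance (n : ℕ) (hn : 0 < n) (i : Fin n) (hi : i.val < n - 1) :
    ODPc (Tour n) (DCycle n)
        (fun σ => σ i = ⟨n - 1, Nat.sub_lt hn Nat.one_pos⟩) =
      ODPc (Tour n) (DCycle n)
        (fun σ => σ ⟨0, hn⟩ = ⟨n - 1, Nat.sub_lt hn Nat.one_pos⟩) ∧
      ∀ k : ℕ,
        Nat.card {σ : Equiv.Perm (Fin n) //
            σ i = ⟨n - 1, Nat.sub_lt hn Nat.one_pos⟩ ∧ cdes n σ = k} =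
          Nat.card {σ : Equiv.Perm (Fin n) //
            σ ⟨0, hn⟩ = ⟨n - 1, Nat.sub_lt hn Nat.one_pos⟩ ∧ cdes n σ = k} := by
  haveI : NeZero n := ⟨hn.ne'⟩
  set ρ : Equiv.Perm (Fin n) := Equiv.addRight i with hρ
  have hρ0 : ∀ σ : Equiv.Perm (Fin n), (σ * ρ) ⟨0, hn⟩ = σ i := by
    intro σ
    have h0 : (⟨0, hn⟩ : Fin n) = 0 := rfl
    rw [Equiv.Perm.mul_apply, h0, hρ]
    simp
  have hρpre : ∀ x : Fin n, ρ (cyclicSucc x) = cyclicSucc (ρ x) := by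
    intro x
    simp only [cyclicSucc_eq, hρ, Equiv.coe_addRight]
    exact add_right_comm x 1 i
  have hmul : ∀ σ : Equiv.Perm (Fin n), σ * ρ = ρ.trans σ := fun σ => rfl
  have hcdes : ∀ σ : Equiv.Perm (Fin n), cdes n (σ * ρ) = cdes n σ := by
    intro σ
    rw [hmul]
    exact cdes_pre σ ρ hρpre
  have houtdeg : ∀ σ : Equiv.Perm (Fin n),
      outdeg (Tour n) (DCycle n) (σ * ρ) = outdeg (Tour n) (DCycle n) σ := by
    intro σ
    rw [outdeg_eq, outdeg_eq]
    have hsymm : (σ * ρ).symm = σ.symm.trans ρ.symm := by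
      rw [hmul]
      rfl
    rw [hsymm]
    apply cdes_trans
    intro a b
    have : ∀ x : Fin n, ρ.symm x = x - i := by
      intro x
      rw [hρ]
      simp [Equiv.addRight, sub_eq_add_neg]
    rw [this, this]
    abel
  constructor
  · rw [ODPc, ODPc]
    apply Fintype.sum_equiv (Equiv.mulRight ρ)
    intro σ
    simp only [Equiv.coe_mulRight]
    simp only [hρ0 σ, houtdeg σ]
    by_cases h : σ i = (⟨n - 1, Nat.sub_lt hn Nat.one_pos⟩ : Fin n)
    · rw [if_pos h, if_pos h]
    · rw [if_neg h, if_neg h]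
  · intro k
    apply Nat.card_congr
    refine Equiv.subtypeEquiv (Equiv.mulRight ρ) ?_
    intro σ
    simp only [Equiv.coe_mulRight]
    rw [hρ0 σ, hcdes σ]
end
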